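/- arXiv:1907.12650 — 8 statements merged into one kernel-verified Lean document; each statement's English description precedes it below -/
import Mathlib

section
/- Let λ, μ, c > 0. Let X be a non-negative random variable with probability density f and E[X] < ∞, and let M be a non-negative integrable random variable independent of X. Suppose that min(x, c) · f(x) = (λ/μ) · (P(M + X > x) − P(X > x)) for Lebesgue-almost every x > 0. If P(X ≤ c) > 0 and m_c := E[X · 1{X ≤ c}] / P(X ≤ c) < c, then P(X > c) = ((λ/μ)·E[M] − m_c) / (c − m_c). -/
open MeasureTheory Filter Real ProbabilityTheory

open Set in
lemma tail_meas {α : Type*} [MeasurableSpace α] (μ : Measure α) (f : α → ℝ) :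
    Measurable fun t : ℝ => (μ {a | t < f a}).toReal :=
  Measurable.ennreal_toReal
    (Antitone.measurable fun _ _ hst ↦ measure_mono fun _ h ↦ lt_of_le_of_lt hst h)

open Set in
lemma tail_integrable {α : Type*} [MeasurableSpace α] {μ : Measure α} [IsFiniteMeasure μ]
    {f : α → ℝ} (hint : Integrable f μ) (hnn : 0 ≤ᵐ[μ] f) :
    IntegrableOn (fun t : ℝ => (μ {a | t < f a}).toReal) (Ioi 0) volume := by
  refine ⟨((tail_meas μ f).aestronglyMeasurable).restrict, ?_⟩
  rw [HasFiniteIntegral]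
  have h1 : ∀ t : ℝ, (‖(μ {a | t < f a}).toReal‖ₑ : ENNReal) = μ {a | t < f a} := by
    intro t
    rw [← ofReal_norm_eq_enorm, Real.norm_of_nonneg ENNReal.toReal_nonneg,
      ENNReal.ofReal_toReal (measure_ne_top _ _)]
  simp_rw [h1]
  rw [← lintegral_eq_lintegral_meas_lt μ hnn hint.aemeasurable]
  exact hint.lintegral_lt_top

/-- Exceedance probability of the stationary `c`-threshold storage process in terms of the
truncated mean `m_c = E[X | X ≤ c]`:
`P(X > c) = ((λ/μ)E[M] − m_c)/(c − m_c)`. -/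
theorem threshold_storage_exceedance_probability
    {Ω : Type*} [MeasurableSpace Ω] (P : Measure Ω) [IsProbabilityMeasure P]
    (lam mu c : ℝ) (hlam : 0 < lam) (hmu : 0 < mu) (hc : 0 < c)
    (X M : Ω → ℝ) (hX : Measurable X) (hM : Measurable M)
    (hX0 : ∀ ω, 0 ≤ X ω) (hM0 : ∀ ω, 0 ≤ M ω)
    (hXint : Integrable X P) (hMint : Integrable M P)
    (hindep : IndepFun X M P)
    (f : ℝ → ℝ) (hf : Measurable f) (hf0 : ∀ y, 0 ≤ f y)
    (hdens : Measure.map X P = volume.withDensity (fun y => ENNReal.ofReal (f y)))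
    (heq : ∀ᵐ x ∂(volume.restrict (Set.Ioi (0 : ℝ))),
      min x c * f x
        = (lam / mu) * ((P {ω | x < M ω + X ω}).toReal - (P {ω | x < X ω}).toReal))
    (hpos : 0 < (P {ω | X ω ≤ c}).toReal)
    (hmc : (∫ ω in {ω | X ω ≤ c}, X ω ∂P) / (P {ω | X ω ≤ c}).toReal < c) :
    (P {ω | c < X ω}).toReal
      = ((lam / mu) * (∫ ω, M ω ∂P)
            - (∫ ω in {ω | X ω ≤ c}, X ω ∂P) / (P {ω | X ω ≤ c}).toReal)
        / (c - (∫ ω in {ω | X ω ≤ c}, X ω ∂P) / (P {ω | X ω ≤ c}).toReal) := by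
  classical
  set s : Set Ω := {ω | X ω ≤ c} with hs_def
  have hs : MeasurableSet s := hX measurableSet_Iic
  have hcompl : {ω | c < X ω} = sᶜ := by
    ext ω; simp [hs_def, not_le]
  -- integrability of min (X ω) c
  have hmin_int : Integrable (fun ω => min (X ω) c) P :=
    hXint.mono (hX.min measurable_const).aestronglyMeasurable
      (Filter.Eventually.of_forall fun ω => by
        rw [Real.norm_of_nonneg (le_min (hX0 ω) hc.le), Real.norm_of_nonneg (hX0 ω)]
        exact min_le_left _ _)
  -- Y = M + X
  set Y : Ω → ℝ := fun ω => M ω + X ω with hY_def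
  have hYint : Integrable Y P := hMint.add hXint
  have hY0 : ∀ ω, 0 ≤ Y ω := fun ω => add_nonneg (hM0 ω) (hX0 ω)
  -- layer cake formulas
  have hlcY : ∫ ω, Y ω ∂P = ∫ t in Set.Ioi (0:ℝ), (P {a | t < Y a}).toReal :=
    hYint.integral_eq_integral_meas_lt (Filter.Eventually.of_forall hY0)
  have hlcX : ∫ ω, X ω ∂P = ∫ t in Set.Ioi (0:ℝ), (P {a | t < X a}).toReal :=
    hXint.integral_eq_integral_meas_lt (Filter.Eventually.of_forall hX0)
  have htY : IntegrableOn (fun t : ℝ => (P {a | t < Y a}).toReal) (Set.Ioi 0) volume :=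
    tail_integrable hYint (Filter.Eventually.of_forall hY0)
  have htX : IntegrableOn (fun t : ℝ => (P {a | t < X a}).toReal) (Set.Ioi 0) volume :=
    tail_integrable hXint (Filter.Eventually.of_forall hX0)
  -- RHS integral
  have hRHS : ∫ t in Set.Ioi (0:ℝ),
      (lam / mu) * ((P {ω | t < M ω + X ω}).toReal - (P {ω | t < X ω}).toReal)
        = (lam / mu) * ∫ ω, M ω ∂P := by
    rw [integral_const_mul, integral_sub htY htX, ← hlcY, ← hlcX, hY_def]
    have : ∫ ω, M ω + X ω ∂P = (∫ ω, M ω ∂P) + ∫ ω, X ω ∂P := integral_add hMint hXint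
    rw [this]; ring
  -- density change of variables
  have hfnn : (fun y => ENNReal.ofReal (f y)) = fun y => ((f y).toNNReal : ENNReal) := rfl
  have hmap_int : Integrable (fun x : ℝ => min x c) (Measure.map X P) := by
    rw [integrable_map_measure ((measurable_id'.min measurable_const).aestronglyMeasurable)
      hX.aemeasurable]
    exact hmin_int
  have hdens_int : Integrable (fun x : ℝ => (f x).toNNReal • min x c) volume := by
    rw [← integrable_withDensity_iff_integrable_smul hf.real_toNNReal]
    rw [← hfnn, ← hdens]
    exact hmap_int
  have hsmul : (fun x : ℝ => (f x).toNNReal • min x c) = fun x => min x c * f x := by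
    funext x
    simp [NNReal.smul_def, Real.coe_toNNReal _ (hf0 x), mul_comm]
  have hchg : ∫ ω, min (X ω) c ∂P = ∫ x, min x c * f x := by
    rw [← integral_map hX.aemeasurable ((measurable_id'.min measurable_const).aestronglyMeasurable),
      hdens, hfnn, integral_withDensity_eq_integral_smul hf.real_toNNReal, ← hsmul]
  -- f vanishes a.e. on Iic 0
  have hmap0 : (Measure.map X P) (Set.Iio 0) = 0 := by
    rw [Measure.map_apply hX measurableSet_Iio]
    have : X ⁻¹' (Set.Iio 0) = ∅ := by
      ext ω; simp [not_lt.mpr (hX0 ω)]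
    simp [this]
  have hfzero : ∀ᵐ x ∂(volume.restrict (Set.Iio (0:ℝ))), f x = 0 := by
    have h0 : ∫⁻ x in Set.Iio (0:ℝ), ENNReal.ofReal (f x) = 0 := by
      have := hmap0
      rw [hdens, withDensity_apply _ measurableSet_Iio] at this
      exact this
    have := (lintegral_eq_zero_iff (hf.ennreal_ofReal)).mp h0
    filter_upwards [this] with x hx
    have : f x ≤ 0 := by simpa [ENNReal.ofReal_eq_zero] using hx
    exact le_antisymm this (hf0 x)
  -- restrict the integral to Ioi 0
  have hzero_Iic : ∫ x in Set.Iic (0:ℝ), min x c * f x = 0 := by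
    have hae : ∀ᵐ x ∂(volume.restrict (Set.Iic (0:ℝ))), min x c * f x = 0 := by
      have hIic : volume.restrict (Set.Iic (0:ℝ)) = volume.restrict (Set.Iio (0:ℝ)) :=
        (Measure.restrict_congr_set Iio_ae_eq_Iic).symm
      rw [hIic]
      filter_upwards [hfzero] with x hx
      simp [hx]
    rw [integral_congr_ae hae, integral_zero]
  have hsplit : ∫ x, min x c * f x = ∫ x in Set.Ioi (0:ℝ), min x c * f x := by
    have hint2 : Integrable (fun x : ℝ => min x c * f x) volume := by
      rw [← hsmul]; exact hdens_int
    rw [← integral_add_compl measurableSet_Iic hint2, hzero_Iic, zero_add,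
      Set.compl_Iic]
  -- key balance equation via heq
  have hLR : ∫ x in Set.Ioi (0:ℝ), min x c * f x
      = ∫ t in Set.Ioi (0:ℝ),
          (lam / mu) * ((P {ω | t < M ω + X ω}).toReal - (P {ω | t < X ω}).toReal) :=
    integral_congr_ae heq
  have hkey : ∫ ω, min (X ω) c ∂P = (lam / mu) * ∫ ω, M ω ∂P := by
    rw [hchg, hsplit, hLR, hRHS]
  -- split E[min(X,c)]
  have hsplit2 : ∫ ω, min (X ω) c ∂P
      = (∫ ω in s, X ω ∂P) + c * (P sᶜ).toReal := by
    rw [← integral_add_compl hs hmin_int]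
    congr 1
    · exact setIntegral_congr_fun hs fun ω hω => min_eq_left hω
    · rw [setIntegral_congr_fun hs.compl
        (fun ω hω => min_eq_right (le_of_lt (by simpa [hs_def, not_le] using hω)))]
      rw [setIntegral_const]
      simp [mul_comm, Measure.real]
  set q : ℝ := (P s).toReal with hq_def
  set p : ℝ := (P sᶜ).toReal with hp_def
  set T : ℝ := ∫ ω in s, X ω ∂P with hT_def
  have hqp : q + p = 1 := by
    rw [hq_def, hp_def, ← ENNReal.toReal_add (measure_ne_top _ _) (measure_ne_top _ _),
      measure_add_measure_compl hs]
    simp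
  have hbal : T + c * p = (lam / mu) * ∫ ω, M ω ∂P := by
    rw [← hkey, hsplit2]
  have hq0 : 0 < q := hpos
  have hdenne : c - T / q ≠ 0 := sub_ne_zero.mpr (ne_of_lt hmc).symm
  rw [hcompl, ← hbal, ← hp_def]
  rw [eq_div_iff hdenne]
  field_simp
  linear_combination (-T) * hqp
end

section
/- Let λ, μ, c > 0. Let X be a non-negative random variable with probability density f and E[X] < ∞, and let M be a non-negative integrable random variable independent of X. Suppose that min(x, c) · f(x) = (λ/μ) · (P(M + X > x) − P(X > x)) for Lebesgue-almost every x > 0. Then E[X · 1{X ≤ c}] = (λ/μ) · (E[min(X + M, c)] − E[min(X, c)]), and consequently E[min(X + M, c)] = (μ/λ)·E[X · 1{X ≤ c}] + (λ/μ)·E[M]. Moreover, if P(X + M ≤ c) > 0 and m′_c := E[(X + M)·1{X + M ≤ c}] / P(X + M ≤ c) < c, then P(X + M > c) = ((μ/λ)·E[X · 1{X ≤ c}] + (λ/μ)·E[M] − m′_c) / (c − m′_c). -/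
open MeasureTheory Filter Real ProbabilityTheory Set
open scoped NNReal ENNReal

section Helpers

private lemma tail_integrable_s12 {Ω : Type*} [MeasurableSpace Ω] (P : Measure Ω)
    [IsProbabilityMeasure P] {Y : Ω → ℝ} (hY : Measurable Y) (hY0 : ∀ ω, 0 ≤ Y ω)
    (hYint : Integrable Y P) :
    IntegrableOn (fun t => (P {ω | t < Y ω}).toReal) (Ioi (0:ℝ)) volume := by
  have hmeas : Measurable fun t : ℝ => P {ω | t < Y ω} :=
    Antitone.measurable (fun s t hst => measure_mono fun ω h => lt_of_le_of_lt hst h)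
  have hlint : ∫⁻ t in Ioi (0:ℝ), P {ω | t < Y ω} ∂volume ≠ ⊤ := by
    rw [← lintegral_eq_lintegral_meas_lt P (Eventually.of_forall hY0) hY.aemeasurable]
    exact hYint.lintegral_lt_top.ne
  exact integrable_toReal_of_lintegral_ne_top hmeas.aemeasurable hlint

private lemma layer_min {Ω : Type*} [MeasurableSpace Ω] (P : Measure Ω)
    [IsProbabilityMeasure P] {c : ℝ} (hc : 0 < c) {Y : Ω → ℝ} (hY : Measurable Y)
    (hY0 : ∀ ω, 0 ≤ Y ω) (hYint : Integrable Y P) :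
    ∫ ω, min (Y ω) c ∂P = ∫ t in Ioo (0:ℝ) c, (P {ω | t < Y ω}).toReal := by
  have hmin : Integrable (fun ω => min (Y ω) c) P := by
    refine hYint.mono ((hY.min measurable_const).aestronglyMeasurable) ?_
    filter_upwards with ω
    rw [Real.norm_eq_abs, Real.norm_eq_abs, abs_of_nonneg (le_min (hY0 ω) hc.le),
      abs_of_nonneg (hY0 ω)]
    exact min_le_left _ _
  rw [hmin.integral_eq_integral_meas_lt (Eventually.of_forall fun ω => le_min (hY0 ω) hc.le)]
  simp only [measureReal_def]
  have key : ∀ t ∈ Ioi (0:ℝ), (P {a | t < min (Y a) c}).toReal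
      = (Ioo (0:ℝ) c).indicator (fun t => (P {ω | t < Y ω}).toReal) t := by
    intro t ht
    by_cases htc : t < c
    · rw [indicator_of_mem (show t ∈ Ioo (0:ℝ) c from ⟨ht, htc⟩)]
      congr 2
      ext a; simp [lt_min_iff, htc]
    · rw [indicator_of_notMem (fun h => htc h.2)]
      have hone : {a | t < min (Y a) c} = (∅ : Set Ω) := by
        ext a
        simp only [mem_setOf_eq, mem_empty_iff_false, iff_false, not_lt]
        exact le_trans (min_le_right _ _) (not_lt.1 htc)
      rw [hone]
      simp
  rw [setIntegral_congr_fun measurableSet_Ioi key, integral_indicator measurableSet_Ioo,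
    Measure.restrict_restrict measurableSet_Ioo,
    inter_eq_left.2 Ioo_subset_Ioi_self]

private lemma density_transfer {Ω : Type*} [MeasurableSpace Ω] (P : Measure Ω)
    {X : Ω → ℝ} (hX : Measurable X) {f : ℝ → ℝ} (hf : Measurable f) (hf0 : ∀ y, 0 ≤ f y)
    (hdens : Measure.map X P = volume.withDensity (fun y => ENNReal.ofReal (f y)))
    {g : ℝ → ℝ} (hg : Measurable g) {s : Set ℝ} (hs : MeasurableSet s) :
    ∫ ω in X ⁻¹' s, g (X ω) ∂P = ∫ y in s, f y * g y := by
  rw [← setIntegral_map hs hg.aestronglyMeasurable hX.aemeasurable, hdens,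
    restrict_withDensity hs,
    show (fun y => ENNReal.ofReal (f y)) = (fun y => ((Real.toNNReal (f y) : ℝ≥0) : ℝ≥0∞)) from rfl,
    integral_withDensity_eq_integral_smul (hf.real_toNNReal) g]
  congr 1
  ext y
  simp [NNReal.smul_def, Real.coe_toNNReal _ (hf0 y)]

private lemma f_zero_neg {Ω : Type*} [MeasurableSpace Ω] (P : Measure Ω)
    {X : Ω → ℝ} (hX : Measurable X) (hX0 : ∀ ω, 0 ≤ X ω)
    {f : ℝ → ℝ} (hf : Measurable f) (hf0 : ∀ y, 0 ≤ f y)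
    (hdens : Measure.map X P = volume.withDensity (fun y => ENNReal.ofReal (f y))) :
    ∀ᵐ y ∂volume, y ∈ Iio (0:ℝ) → f y = 0 := by
  have h0 : (volume.withDensity fun y => ENNReal.ofReal (f y)) (Iio 0) = 0 := by
    rw [← hdens, Measure.map_apply hX measurableSet_Iio]
    have hE : X ⁻¹' Iio 0 = ∅ := by
      ext ω; simp [not_lt.2 (hX0 ω)]
    simp [hE]
  rw [withDensity_apply _ measurableSet_Iio] at h0
  have h1 := (lintegral_eq_zero_iff (hf.ennreal_ofReal)).1 h0
  rw [EventuallyEq, ae_restrict_iff' measurableSet_Iio] at h1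
  filter_upwards [h1] with y hy hy'
  have := ENNReal.ofReal_eq_zero.1 (hy hy')
  exact le_antisymm this (hf0 y)
end Helpers

/-- For the stationary `c`-threshold storage process:
`E[X·1{X ≤ c}] = (λ/μ)(E[min(X+M,c)] − E[min(X,c)])`, hence
`E[min(X+M,c)] = (μ/λ)E[X·1{X ≤ c}] + (λ/μ)E[M]`, and, with
`m′_c = E[X+M | X+M ≤ c] < c`, the jump-added exceedance probability is
`P(X+M > c) = ((μ/λ)E[X·1{X≤c}] + (λ/μ)E[M] − m′_c)/(c − m′_c)`. -/
theorem threshold_storage_jump_added_exceedance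
    {Ω : Type*} [MeasurableSpace Ω] (P : Measure Ω) [IsProbabilityMeasure P]
    (lam mu c : ℝ) (hlam : 0 < lam) (hmu : 0 < mu) (hc : 0 < c)
    (X M : Ω → ℝ) (hX : Measurable X) (hM : Measurable M)
    (hX0 : ∀ ω, 0 ≤ X ω) (hM0 : ∀ ω, 0 ≤ M ω)
    (hXint : Integrable X P) (hMint : Integrable M P)
    (hindep : IndepFun X M P)
    (f : ℝ → ℝ) (hf : Measurable f) (hf0 : ∀ y, 0 ≤ f y)
    (hdens : Measure.map X P = volume.withDensity (fun y => ENNReal.ofReal (f y)))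
    (heq : ∀ᵐ x ∂(volume.restrict (Set.Ioi (0 : ℝ))),
      min x c * f x
        = (lam / mu) * ((P {ω | x < M ω + X ω}).toReal - (P {ω | x < X ω}).toReal)) :
    (∫ ω in {ω | X ω ≤ c}, X ω ∂P
        = (lam / mu) * ((∫ ω, min (X ω + M ω) c ∂P) - ∫ ω, min (X ω) c ∂P))
    ∧ (∫ ω, min (X ω + M ω) c ∂P
        = (mu / lam) * (∫ ω in {ω | X ω ≤ c}, X ω ∂P) + (lam / mu) * ∫ ω, M ω ∂P)
    ∧ (0 < (P {ω | X ω + M ω ≤ c}).toReal →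
        (∫ ω in {ω | X ω + M ω ≤ c}, (X ω + M ω) ∂P) / (P {ω | X ω + M ω ≤ c}).toReal < c →
        (P {ω | c < X ω + M ω}).toReal
          = ((mu / lam) * (∫ ω in {ω | X ω ≤ c}, X ω ∂P) + (lam / mu) * (∫ ω, M ω ∂P)
                - (∫ ω in {ω | X ω + M ω ≤ c}, (X ω + M ω) ∂P)
                  / (P {ω | X ω + M ω ≤ c}).toReal)
            / (c - (∫ ω in {ω | X ω + M ω ≤ c}, (X ω + M ω) ∂P)
                  / (P {ω | X ω + M ω ≤ c}).toReal)) := by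
  have hsetMX : ∀ x : ℝ, {ω | x < M ω + X ω} = {ω | x < X ω + M ω} := by
    intro x; ext ω; simp [add_comm]
  simp only [hsetMX] at heq
  have hY : Measurable fun ω => X ω + M ω := hX.add hM
  have hY0 : ∀ ω, 0 ≤ X ω + M ω := fun ω => add_nonneg (hX0 ω) (hM0 ω)
  have hYint : Integrable (fun ω => X ω + M ω) P := hXint.add hMint
  have hGint := tail_integrable_s12 P hY hY0 hYint
  have hHint := tail_integrable_s12 P hX hX0 hXint
  have hGc : IntegrableOn (fun t => (P {ω | t < X ω + M ω}).toReal) (Set.Ioo 0 c) volume :=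
    hGint.mono_set Set.Ioo_subset_Ioi_self
  have hHc : IntegrableOn (fun t => (P {ω | t < X ω}).toReal) (Set.Ioo 0 c) volume :=
    hHint.mono_set Set.Ioo_subset_Ioi_self
  have hfneg := f_zero_neg P hX hX0 hf hf0 hdens
  have hne0 : ∀ᵐ y ∂(volume : Measure ℝ), y ≠ 0 := by
    rw [ae_iff]; simpa using measure_singleton (0:ℝ)
  have hnec : ∀ᵐ y ∂(volume : Measure ℝ), y ≠ c := by
    rw [ae_iff]; simpa using measure_singleton c
  -- E[X · 1{X ≤ c}] as a density integral over (0,c)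
  have hAdef : ∫ ω in {ω | X ω ≤ c}, X ω ∂P = ∫ y in Set.Ioo 0 c, f y * y := by
    have h1 := density_transfer P hX hf hf0 hdens measurable_id measurableSet_Iic (s := Set.Iic c)
    simp only [id_eq] at h1
    have h2 : {ω | X ω ≤ c} = X ⁻¹' Set.Iic c := rfl
    rw [h2, h1]
    have hae : (fun y => f y * y) =ᵐ[volume.restrict (Set.Iic c)]
        (Set.Ioo 0 c).indicator (fun y => f y * y) := by
      filter_upwards [ae_restrict_of_ae (hfneg.and (hne0.and hnec)),
        ae_restrict_mem measurableSet_Iic] with y hy hyc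
      obtain ⟨h1', h2', h3'⟩ := hy
      by_cases hmem : y ∈ Set.Ioo 0 c
      · rw [Set.indicator_of_mem hmem]
      · rw [Set.indicator_of_notMem hmem]
        have hylt : y < 0 := by
          rcases lt_trichotomy y 0 with h | h | h
          · exact h
          · exact absurd h h2'
          · exact absurd (⟨h, lt_of_le_of_ne hyc h3'⟩ : y ∈ Set.Ioo 0 c) hmem
        rw [h1' hylt, zero_mul]
    rw [integral_congr_ae hae, integral_indicator measurableSet_Ioo,
      Measure.restrict_restrict measurableSet_Ioo,
      show Set.Ioo 0 c ∩ Set.Iic c = Set.Ioo 0 c from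
        Set.inter_eq_left.2 (fun y hy => le_of_lt hy.2)]
  -- E[min(X,c)] as a density integral over (0,∞)
  have hEmdef : ∫ ω, min (X ω) c ∂P = ∫ y in Set.Ioi 0, f y * min y c := by
    have h1 := density_transfer P hX hf hf0 hdens (g := fun y => min y c)
      (measurable_id.min measurable_const) (MeasurableSet.univ (α := ℝ))
    rw [Set.preimage_univ] at h1
    rw [Measure.restrict_univ] at h1
    rw [h1]
    have hae : (fun y => f y * min y c) =ᵐ[(volume : Measure ℝ)]
        (Set.Ioi 0).indicator (fun y => f y * min y c) := by
      filter_upwards [hfneg, hne0] with y h1' h2'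
      by_cases hmem : y ∈ Set.Ioi 0
      · rw [Set.indicator_of_mem hmem]
      · rw [Set.indicator_of_notMem hmem]
        have hylt : y < 0 := lt_of_le_of_ne (not_lt.1 hmem) h2'
        rw [h1' hylt, zero_mul]
    rw [Measure.restrict_univ, integral_congr_ae hae, integral_indicator measurableSet_Ioi]
  -- layer-cake identities for min
  have hEmm_layer : ∫ ω, min (X ω + M ω) c ∂P
      = ∫ t in Set.Ioo (0:ℝ) c, (P {ω | t < X ω + M ω}).toReal :=
    layer_min P hc hY hY0 hYint
  have hEm_layer : ∫ ω, min (X ω) c ∂P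
      = ∫ t in Set.Ioo (0:ℝ) c, (P {ω | t < X ω}).toReal :=
    layer_min P hc hX hX0 hXint
  -- full layer-cake
  have hGfull : ∫ x in Set.Ioi (0:ℝ), (P {ω | x < X ω + M ω}).toReal = ∫ ω, (X ω + M ω) ∂P :=
    (hYint.integral_eq_integral_meas_lt (Eventually.of_forall hY0)).symm
  have hHfull : ∫ x in Set.Ioi (0:ℝ), (P {ω | x < X ω}).toReal = ∫ ω, X ω ∂P :=
    (hXint.integral_eq_integral_meas_lt (Eventually.of_forall hX0)).symm
  -- integrate heq over (0,∞) : E[min(X,c)] = (lam/mu) E[M]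
  have hEm2 : ∫ ω, min (X ω) c ∂P = (lam / mu) * ∫ ω, M ω ∂P := by
    have hcomm : ∫ x in Set.Ioi (0:ℝ), min x c * f x = ∫ y in Set.Ioi (0:ℝ), f y * min y c :=
      integral_congr_ae (Eventually.of_forall fun x => mul_comm _ _)
    have hEio := integral_congr_ae heq
    rw [hEmdef, ← hcomm, hEio, integral_const_mul, integral_sub hGint hHint, hGfull, hHfull,
      integral_add hXint hMint]
    ring
  -- integrate heq over (0,c)
  have heqc : ∀ᵐ x ∂(volume.restrict (Set.Ioo (0:ℝ) c)),
      min x c * f x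
        = (lam / mu) * ((P {ω | x < X ω + M ω}).toReal - (P {ω | x < X ω}).toReal) :=
    heq.filter_mono (ae_mono (Measure.restrict_mono Set.Ioo_subset_Ioi_self le_rfl))
  have hLoo : ∫ x in Set.Ioo (0:ℝ) c, min x c * f x = ∫ y in Set.Ioo (0:ℝ) c, f y * y :=
    setIntegral_congr_fun measurableSet_Ioo
      (fun x hx => by rw [min_eq_left (le_of_lt hx.2), mul_comm])
  have part1 : ∫ ω in {ω | X ω ≤ c}, X ω ∂P
      = (lam / mu) * ((∫ ω, min (X ω + M ω) c ∂P) - ∫ ω, min (X ω) c ∂P) := by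
    rw [hAdef, ← hLoo, integral_congr_ae heqc, integral_const_mul, integral_sub hGc hHc,
      ← hEmm_layer, ← hEm_layer]
  have part2 : ∫ ω, min (X ω + M ω) c ∂P
      = (mu / lam) * (∫ ω in {ω | X ω ≤ c}, X ω ∂P) + (lam / mu) * ∫ ω, M ω ∂P := by
    have hx : (mu / lam) * (∫ ω in {ω | X ω ≤ c}, X ω ∂P)
        = (∫ ω, min (X ω + M ω) c ∂P) - ∫ ω, min (X ω) c ∂P := by
      rw [part1]
      field_simp
    rw [← hEm2]
    linarith
  refine ⟨part1, part2, fun hp hm => ?_⟩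
  set S := {ω | X ω + M ω ≤ c} with hS
  have hmeasS : MeasurableSet S := measurableSet_le hY measurable_const
  have hSc : {ω | c < X ω + M ω} = Sᶜ := by ext ω; simp [hS, not_le]
  have hpq : (P S).toReal + (P Sᶜ).toReal = 1 := by
    rw [← ENNReal.toReal_add (measure_ne_top P S) (measure_ne_top P Sᶜ),
      measure_add_measure_compl hmeasS]
    simp
  have hminint : Integrable (fun ω => min (X ω + M ω) c) P := by
    refine hYint.mono ((hY.min measurable_const).aestronglyMeasurable) ?_
    filter_upwards with ω
    rw [Real.norm_eq_abs, Real.norm_eq_abs, abs_of_nonneg (le_min (hY0 ω) hc.le),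
      abs_of_nonneg (hY0 ω)]
    exact min_le_left _ _
  have hsplit : ∫ ω, min (X ω + M ω) c ∂P
      = (∫ ω in S, (X ω + M ω) ∂P) + c * (P Sᶜ).toReal := by
    rw [← integral_add_compl hmeasS hminint]
    congr 1
    · exact setIntegral_congr_fun hmeasS (fun ω hω => min_eq_left hω)
    · have hEq : Set.EqOn (fun ω => min (X ω + M ω) c) (fun _ => c) Sᶜ := by
        intro ω hω
        have h' : ¬ (X ω + M ω ≤ c) := by rw [hS] at hω; exact hω
        exact min_eq_right (le_of_lt (not_le.1 h'))
      rw [setIntegral_congr_fun hmeasS.compl hEq, setIntegral_const, smul_eq_mul, mul_comm, measureReal_def]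
  have hcm : 0 < c - (∫ ω in S, (X ω + M ω) ∂P) / (P S).toReal := sub_pos.2 hm
  rw [hSc, ← part2, hsplit, eq_div_iff (ne_of_gt hcm)]
  set m := (∫ ω in S, (X ω + M ω) ∂P) / (P S).toReal with hmdef
  have hA : (∫ ω in S, (X ω + M ω) ∂P) = m * (P S).toReal := by
    rw [hmdef, div_mul_cancel₀ _ (ne_of_gt hp)]
  rw [hA]
  have hp1 : (P S).toReal = 1 - (P Sᶜ).toReal := by linarith
  rw [hp1]
  ring
end

section
/- Let λ, μ, c > 0. Let X be a random variable taking values in (0, c] with probability density f, and let M be a non-negative integrable random variable independent of X. Suppose that x · f(x) = (λ/μ) · (P(M + X > x) − P(X > x)) for Lebesgue-almost every x ∈ (0, c]. Then ((λ + μ)/λ) · E[X] = E[min(M + X, c)], and consequently E[X] ≥ (λ/(λ + μ)) · E[min(M, c)]. -/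
open MeasureTheory Filter Real ProbabilityTheory
open scoped ENNReal NNReal
set_option maxHeartbeats 1000000

private lemma cutIoi (c : ℝ) (g : ℝ → ℝ) (hg : ∀ t, c < t → g t = 0) :
    ∫ t in Set.Ioi (0:ℝ), g t = ∫ t in Set.Ioc (0:ℝ) c, g t := by
  refine setIntegral_eq_of_subset_of_forall_diff_eq_zero measurableSet_Ioi
    Set.Ioc_subset_Ioi_self fun t ht => ?_
  rcases ht with ⟨ht1, ht2⟩
  simp only [Set.mem_Ioc, not_and, not_le] at ht2
  exact hg t (ht2 ht1)

/-- For the stationary finite-capacity storage process with capacity `c`: if `X ∈ (0,c]`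
has density `f` satisfying `x f(x) = (λ/μ)(P(M+X > x) − P(X > x))` a.e. on `(0,c]`, with
`M ≥ 0` integrable and independent of `X`, then `((λ+μ)/λ) E[X] = E[min(M+X, c)]`, and
consequently `E[X] ≥ (λ/(λ+μ)) E[min(M, c)]`. -/
theorem finite_storage_mean_identity
    {Ω : Type*} [MeasurableSpace Ω] (P : Measure Ω) [IsProbabilityMeasure P]
    (lam mu c : ℝ) (hlam : 0 < lam) (hmu : 0 < mu) (hc : 0 < c)
    (X M : Ω → ℝ) (hX : Measurable X) (hM : Measurable M)
    (hX0 : ∀ ω, 0 < X ω) (hXc : ∀ ω, X ω ≤ c) (hM0 : ∀ ω, 0 ≤ M ω)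
    (hMint : Integrable M P)
    (hindep : IndepFun X M P)
    (f : ℝ → ℝ) (hf : Measurable f) (hf0 : ∀ y, 0 ≤ f y)
    (hdens : Measure.map X P = volume.withDensity (fun y => ENNReal.ofReal (f y)))
    (heq : ∀ᵐ x ∂(volume.restrict (Set.Ioc (0 : ℝ) c)),
      x * f x
        = (lam / mu) * ((P {ω | x < M ω + X ω}).toReal - (P {ω | x < X ω}).toReal)) :
    ((lam + mu) / lam) * (∫ ω, X ω ∂P) = ∫ ω, min (M ω + X ω) c ∂P
    ∧ (lam / (lam + mu)) * (∫ ω, min (M ω) c ∂P) ≤ ∫ ω, X ω ∂P := by --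

  have hA : MeasurableSet (Set.Ioc (0:ℝ) c) := measurableSet_Ioc
  -- integrability of X and min(M+X,c)
  have hXint : Integrable X P := by
    refine Integrable.mono' (integrable_const c) hX.aestronglyMeasurable ?_
    filter_upwards with ω
    rw [Real.norm_eq_abs, abs_of_pos (hX0 ω)]; exact hXc ω
  have hSmeas : Measurable (fun ω => min (M ω + X ω) c) :=
    (hM.add hX).min measurable_const
  have hS0 : ∀ ω, 0 < min (M ω + X ω) c := fun ω =>
    lt_min (add_pos_of_nonneg_of_pos (hM0 ω) (hX0 ω)) hc
  have hSint : Integrable (fun ω => min (M ω + X ω) c) P := by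
    refine Integrable.mono' (integrable_const c) hSmeas.aestronglyMeasurable ?_
    filter_upwards with ω
    rw [Real.norm_eq_abs, abs_of_pos (hS0 ω)]; exact min_le_right _ _
  -- layer cake for X
  have hLX : ∫ ω, X ω ∂P = ∫ t in Set.Ioc (0:ℝ) c, (P {ω | t < X ω}).toReal := by
    rw [hXint.integral_eq_integral_meas_lt (Eventually.of_forall fun ω => (hX0 ω).le)]
    refine cutIoi c _ fun t htc => ?_
    have : {ω | t < X ω} = ∅ := by
      ext ω; simp only [Set.mem_setOf_eq, Set.mem_empty_iff_false, iff_false, not_lt]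
      exact (hXc ω).trans htc.le
    rw [this]; simp
  -- layer cake for min(M+X,c)
  have hLS : ∫ ω, min (M ω + X ω) c ∂P
      = ∫ t in Set.Ioc (0:ℝ) c, (P {ω | t < M ω + X ω}).toReal := by
    rw [hSint.integral_eq_integral_meas_lt (Eventually.of_forall fun ω => (hS0 ω).le)]
    have step1 : ∫ t in Set.Ioi (0:ℝ), (P {ω | t < min (M ω + X ω) c}).toReal
        = ∫ t in Set.Ioc (0:ℝ) c, (P {ω | t < min (M ω + X ω) c}).toReal := by
      refine cutIoi c _ fun t htc => ?_
      have : {ω | t < min (M ω + X ω) c} = ∅ := by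
        ext ω; simp only [Set.mem_setOf_eq, Set.mem_empty_iff_false, iff_false, not_lt]
        exact (min_le_right _ _).trans htc.le
      rw [this]; simp
    simp only [measureReal_def]
    rw [step1, integral_Ioc_eq_integral_Ioo, integral_Ioc_eq_integral_Ioo]
    refine setIntegral_congr_fun measurableSet_Ioo fun t ht => ?_
    have hset : {ω | t < min (M ω + X ω) c} = {ω | t < M ω + X ω} := by
      ext ω
      simp only [Set.mem_setOf_eq, lt_min_iff]
      exact ⟨fun h => h.1, fun h => ⟨h, ht.2⟩⟩
    rw [hset]
  -- E[X] as density integral over (0,c]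
  have hmapA : (volume.withDensity (fun y => ENNReal.ofReal (f y))) (Set.Ioc (0:ℝ) c)ᶜ = 0 := by
    rw [← hdens, Measure.map_apply hX hA.compl]
    have : X ⁻¹' (Set.Ioc (0:ℝ) c)ᶜ = ∅ := by
      ext ω
      simp only [Set.mem_preimage, Set.mem_compl_iff, Set.mem_Ioc, Set.mem_empty_iff_false,
        iff_false, not_not]
      exact ⟨hX0 ω, hXc ω⟩
    simp [this]
  have hrestr : (volume.withDensity (fun y => ENNReal.ofReal (f y))).restrict (Set.Ioc (0:ℝ) c)
      = volume.withDensity (fun y => ENNReal.ofReal (f y)) :=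
    Measure.restrict_eq_self_of_ae_mem (by
      rw [MeasureTheory.ae_iff]
      exact hmapA)
  have hD : ∫ ω, X ω ∂P = ∫ x in Set.Ioc (0:ℝ) c, x * f x := by
    have h1 : ∫ ω, X ω ∂P = ∫ x, x ∂(Measure.map X P) :=
      (integral_map hX.aemeasurable measurable_id.aestronglyMeasurable).symm
    rw [h1, hdens, ← hrestr, restrict_withDensity hA]
    have h2 : (fun y => ENNReal.ofReal (f y)) = (fun y => ((f y).toNNReal : ℝ≥0∞)) := rfl
    rw [h2, integral_withDensity_eq_integral_smul hf.real_toNNReal]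
    refine setIntegral_congr_fun hA fun x _ => ?_
    simp [NNReal.smul_def, Real.coe_toNNReal _ (hf0 x), mul_comm]
  -- measurability and bounds of tail functions
  have hamono : Antitone (fun t => (P {ω | t < M ω + X ω}).toReal) := by
    intro s t hst
    apply ENNReal.toReal_mono (measure_ne_top _ _)
    exact measure_mono fun ω h => lt_of_le_of_lt hst h
  have hbmono : Antitone (fun t => (P {ω | t < X ω}).toReal) := by
    intro s t hst
    apply ENNReal.toReal_mono (measure_ne_top _ _)
    exact measure_mono fun ω h => lt_of_le_of_lt hst h
  have hameas := hamono.measurable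
  have hbmeas := hbmono.measurable
  have hfin : volume (Set.Ioc (0:ℝ) c) < ⊤ := measure_Ioc_lt_top
  have hbd : ∀ (g : Ω → ℝ), IntegrableOn (fun t => (P {ω | t < g ω}).toReal)
      (Set.Ioc (0:ℝ) c) volume → True := fun _ _ => trivial
  have haint : IntegrableOn (fun t => (P {ω | t < M ω + X ω}).toReal)
      (Set.Ioc (0:ℝ) c) volume := by
    refine Integrable.mono' (g := fun _ => (1:ℝ)) (integrableOn_const hfin.ne) hameas.aestronglyMeasurable ?_
    filter_upwards with t
    rw [Real.norm_eq_abs, abs_of_nonneg ENNReal.toReal_nonneg]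
    exact ENNReal.toReal_le_of_le_ofReal zero_le_one (by simpa using prob_le_one)
  have hbint : IntegrableOn (fun t => (P {ω | t < X ω}).toReal)
      (Set.Ioc (0:ℝ) c) volume := by
    refine Integrable.mono' (g := fun _ => (1:ℝ)) (integrableOn_const hfin.ne) hbmeas.aestronglyMeasurable ?_
    filter_upwards with t
    rw [Real.norm_eq_abs, abs_of_nonneg ENNReal.toReal_nonneg]
    exact ENNReal.toReal_le_of_le_ofReal zero_le_one (by simpa using prob_le_one)
  -- integrate the density equation
  have hkey : ∫ ω, X ω ∂P
      = (lam / mu) * ((∫ ω, min (M ω + X ω) c ∂P) - ∫ ω, X ω ∂P) := by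
    have h3 : ∫ x in Set.Ioc (0:ℝ) c, x * f x
        = ∫ x in Set.Ioc (0:ℝ) c,
            (lam / mu) * ((P {ω | x < M ω + X ω}).toReal - (P {ω | x < X ω}).toReal) :=
      integral_congr_ae heq
    have h4 : ∫ x in Set.Ioc (0:ℝ) c,
        (lam / mu) * ((P {ω | x < M ω + X ω}).toReal - (P {ω | x < X ω}).toReal)
        = (lam / mu) * ((∫ ω, min (M ω + X ω) c ∂P) - ∫ ω, X ω ∂P) := by
      rw [integral_const_mul, integral_sub haint hbint, ← hLX, ← hLS]
    exact hD.trans (h3.trans h4)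
  constructor
  · have hEX : (lam + mu) * (∫ ω, X ω ∂P) = lam * ∫ ω, min (M ω + X ω) c ∂P := by
      have hmu' : mu ≠ 0 := hmu.ne'
      field_simp at hkey
      nlinarith [hkey]
    field_simp
    linarith [hEX]
  · have hminint : Integrable (fun ω => min (M ω) c) P := by
      refine Integrable.mono' (integrable_const c) (hM.min measurable_const).aestronglyMeasurable ?_
      filter_upwards with ω
      rw [Real.norm_eq_abs, abs_of_nonneg (le_min (hM0 ω) hc.le)]
      exact min_le_right _ _
    have hle : ∫ ω, min (M ω) c ∂P ≤ ∫ ω, min (M ω + X ω) c ∂P := by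
      refine integral_mono hminint hSint fun ω => ?_
      exact min_le_min (le_add_of_nonneg_right (hX0 ω).le) le_rfl
    have hEX : (lam + mu) * (∫ ω, X ω ∂P) = lam * ∫ ω, min (M ω + X ω) c ∂P := by
      field_simp at hkey
      nlinarith [hkey]
    rw [div_mul_eq_mul_div, div_le_iff₀ (by positivity)]
    nlinarith [hle, hEX]
end

section
/- Let λ, μ, α > 0. Suppose f : (0, ∞) → [0, ∞) is continuous with ∫_0^∞ f(x) dx = 1 and satisfies x · f(x) = (λ/μ) · ∫_0^x e^{−α(x−y)} f(y) dy for all x > 0. Then f(x) = α^{λ/μ} x^{λ/μ − 1} e^{−αx} / Γ(λ/μ) for all x > 0; that is, f is the probability density of the Gamma distribution with shape λ/μ and rate α. -/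
open MeasureTheory Filter Real

/-- A function with zero derivative on `Ioi 0` is constant there. -/
lemma aux_const_of_deriv_zero_Ioi (G : ℝ → ℝ)
    (h : ∀ x ∈ Set.Ioi (0 : ℝ), HasDerivAt G 0 x) :
    ∀ x ∈ Set.Ioi (0 : ℝ), ∀ y ∈ Set.Ioi (0 : ℝ), G x = G y := by
  have key : ∀ a b : ℝ, 0 < a → a < b → G a = G b := by
    intro a b ha hab
    have hcont : ContinuousOn G (Set.Icc a b) := by
      intro x hx
      exact ((h x (lt_of_lt_of_le ha hx.1)).continuousAt).continuousWithinAt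
    have hderiv : ∀ x ∈ Set.Ioo a b, HasDerivAt G ((fun _ => (0:ℝ)) x) x := by
      intro x hx
      exact h x (ha.trans hx.1)
    obtain ⟨c, hc, hc0⟩ := exists_hasDerivAt_eq_slope G (fun _ => 0) hab hcont hderiv
    have : (G b - G a) / (b - a) = 0 := hc0.symm
    have hba : b - a ≠ 0 := sub_ne_zero.mpr (ne_of_gt hab)
    field_simp at this
    linarith
  intro x hx y hy
  rcases lt_trichotomy x y with hlt | heq | hgt
  · exact key x y hx hlt
  · rw [heq]
  · exact (key y x hy hgt).symm

/-- The unique continuous probability-density solution of the shot-noise stationary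
integral equation `x f(x) = (λ/μ) ∫_0^x e^{−α(x−y)} f(y) dy` is the Gamma(λ/μ, α)
density `f(x) = α^{λ/μ} x^{λ/μ−1} e^{−αx} / Γ(λ/μ)`. -/
theorem shot_noise_stationary_density_gamma
    (lam mu α : ℝ) (hlam : 0 < lam) (hmu : 0 < mu) (hα : 0 < α)
    (f : ℝ → ℝ) (hfc : ContinuousOn f (Set.Ioi 0))
    (hf0 : ∀ x : ℝ, 0 < x → 0 ≤ f x)
    (hnorm : ∫ x in Set.Ioi (0 : ℝ), f x = 1)
    (heq : ∀ x : ℝ, 0 < x →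
      x * f x = (lam / mu) * ∫ y in (0 : ℝ)..x, Real.exp (-α * (x - y)) * f y) :
    ∀ x : ℝ, 0 < x →
      f x = α ^ (lam / mu) * x ^ (lam / mu - 1) * Real.exp (-α * x)
        / Real.Gamma (lam / mu) := by
  set c : ℝ := lam / mu with hc_def
  have hc : 0 < c := div_pos hlam hmu
  -- f is integrable on Ioi 0
  have hfint : IntegrableOn f (Set.Ioi 0) := by
    by_contra h
    rw [MeasureTheory.integral_undef h] at hnorm
    norm_num at hnorm
  -- the auxiliary kernel function
  set g : ℝ → ℝ := fun y => Real.exp (α * y) * f y with hg_def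
  have hgcont : ContinuousOn g (Set.Ioi 0) :=
    (Real.continuous_exp.comp (continuous_const.mul continuous_id)).continuousOn.mul hfc
  -- g is integrable on Ioc 0 x for every x > 0
  have hgint : ∀ x : ℝ, 0 < x → IntegrableOn g (Set.Ioc 0 x) := by
    intro x hx
    have hfm : AEStronglyMeasurable f (volume.restrict (Set.Ioc 0 x)) :=
      (hfint.mono_set Set.Ioc_subset_Ioi_self).aestronglyMeasurable
    have hfint' : IntegrableOn (fun y => Real.exp (α * x) * |f y|) (Set.Ioc 0 x) :=
      ((hfint.mono_set Set.Ioc_subset_Ioi_self).norm.const_mul _)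
    refine hfint'.mono' ?_ ?_
    · exact ((Real.continuous_exp.comp
        (continuous_const.mul continuous_id)).aestronglyMeasurable).mul hfm
    · filter_upwards [ae_restrict_mem measurableSet_Ioc] with y hy
      have h1 : Real.exp (α * y) ≤ Real.exp (α * x) :=
        Real.exp_le_exp.mpr (mul_le_mul_of_nonneg_left hy.2 hα.le)
      have : ‖g y‖ = Real.exp (α * y) * |f y| := by
        rw [hg_def]
        simp [abs_mul, abs_of_pos (Real.exp_pos _)]
      rw [this]
      exact mul_le_mul_of_nonneg_right h1 (abs_nonneg _)
  -- the primitive F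
  set F : ℝ → ℝ := fun x => ∫ y in (0 : ℝ)..x, g y with hF_def
  have hgiv : ∀ x : ℝ, 0 < x → IntervalIntegrable g volume 0 x := by
    intro x hx
    rw [intervalIntegrable_iff, Set.uIoc_of_le hx.le]
    exact hgint x hx
  -- FTC: F' = g on Ioi 0
  have hF' : ∀ x ∈ Set.Ioi (0 : ℝ), HasDerivAt F (g x) x := by
    intro x hx
    have hx' : (0 : ℝ) < x := hx
    refine intervalIntegral.integral_hasDerivAt_right (hgiv x hx') ?_ ?_
    · exact ⟨Set.Ioi 0, Ioi_mem_nhds hx', hgcont.aestronglyMeasurable measurableSet_Ioi⟩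
    · exact hgcont.continuousAt (Ioi_mem_nhds hx')
  -- key reformulation of the integral equation
  have hkey : ∀ x : ℝ, 0 < x → x * f x = c * (Real.exp (-α * x) * F x) := by
    intro x hx
    have := heq x hx
    rw [this]
    congr 1
    have : (fun y => Real.exp (-α * (x - y)) * f y)
        = fun y => Real.exp (-α * x) * g y := by
      funext y
      rw [hg_def]
      rw [← mul_assoc, ← Real.exp_add]
      ring_nf
    rw [this, intervalIntegral.integral_const_mul]
  -- the function G = F(x) * x^(-c) has zero derivative
  set G : ℝ → ℝ := fun x => F x * x ^ (-c) with hG_def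
  have hG' : ∀ x ∈ Set.Ioi (0 : ℝ), HasDerivAt G 0 x := by
    intro x hx
    have hx' : (0 : ℝ) < x := hx
    have h1 : HasDerivAt (fun x : ℝ => x ^ (-c)) (-c * x ^ (-c - 1)) x :=
      Real.hasDerivAt_rpow_const (Or.inl hx'.ne')
    have h2 : HasDerivAt G (g x * x ^ (-c) + F x * (-c * x ^ (-c - 1))) x :=
      (hF' x hx).mul h1
    have hFx : F x = Real.exp (α * x) * x * f x / c := by
      have hk := hkey x hx'
      have h3 : Real.exp (α * x) * Real.exp (-α * x) = 1 := by
        rw [← Real.exp_add]; ring_nf; exact Real.exp_zero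
      calc F x = (Real.exp (α * x) * Real.exp (-α * x)) * F x := by rw [h3]; ring
        _ = Real.exp (α * x) * (Real.exp (-α * x) * F x) := by ring
        _ = Real.exp (α * x) * (x * f x / c) := by
            congr 1
            rw [eq_div_iff hc.ne']
            linarith [hk]
        _ = Real.exp (α * x) * x * f x / c := by ring
    have hval : g x * x ^ (-c) + F x * (-c * x ^ (-c - 1)) = 0 := by
      rw [hFx, hg_def]
      have hrp : x * x ^ (-c - 1) = x ^ (-c) := by
        have h7 := Real.rpow_add hx' (-c - 1) 1
        rw [Real.rpow_one] at h7
        have h6 : -c - 1 + 1 = -c := by ring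
        rw [h6] at h7
        linarith [h7]
      field_simp
      linear_combination (-(Real.exp (α * x) * f x)) * hrp
    rwa [hval] at h2
  -- G is constant; let K = F 1 be its value
  have hGconst := aux_const_of_deriv_zero_Ioi G hG'
  set K : ℝ := F 1 with hK_def
  have hFK : ∀ x : ℝ, 0 < x → F x = K * x ^ c := by
    intro x hx
    have h1 : G x = G 1 := hGconst x hx 1 (Set.mem_Ioi.mpr one_pos)
    rw [hG_def] at h1
    simp only [Real.one_rpow, mul_one] at h1
    have h2 : F x * x ^ (-c) = K := by
      rw [hK_def]; exact h1
    have hxc : x ^ (-c) = (x ^ c)⁻¹ := Real.rpow_neg hx.le c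
    rw [hxc] at h2
    have hxcne : x ^ c ≠ 0 := (Real.rpow_pos_of_pos hx c).ne'
    field_simp at h2
    rw [h2, mul_comm]
  -- formula for f in terms of K
  have hformula : ∀ x : ℝ, 0 < x →
      f x = c * K * (x ^ (c - 1) * Real.exp (-α * x)) := by
    intro x hx
    have hk := hkey x hx
    rw [hFK x hx] at hk
    have hxc : x ^ c = x ^ (c - 1) * x := by
      have h7 := Real.rpow_add hx (c - 1) 1
      rw [Real.rpow_one] at h7
      have h6 : c - 1 + 1 = c := by ring
      rw [h6] at h7
      exact h7
    rw [hxc] at hk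
    have hxne : x ≠ 0 := hx.ne'
    have : x * f x = x * (c * K * (x ^ (c - 1) * Real.exp (-α * x))) := by
      rw [hk]; ring
    exact mul_left_cancel₀ hxne this
  -- compute K from the normalization
  have hgamma : ∫ t in Set.Ioi (0 : ℝ), t ^ (c - 1) * Real.exp (-(α * t))
      = (1 / α) ^ c * Real.Gamma c := Real.integral_rpow_mul_exp_neg_mul_Ioi hc hα
  have hint : (∫ x in Set.Ioi (0 : ℝ), f x) = c * K * ((1 / α) ^ c * Real.Gamma c) := by
    rw [show (∫ x in Set.Ioi (0 : ℝ), f x)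
        = ∫ x in Set.Ioi (0 : ℝ), c * K * (x ^ (c - 1) * Real.exp (-(α * x))) from
      MeasureTheory.setIntegral_congr_fun measurableSet_Ioi
        (fun x hx => by rw [hformula x hx, show -α * x = -(α * x) by ring]),
      MeasureTheory.integral_const_mul, hgamma]
  have hnorm' : (1 : ℝ) = c * K * ((1 / α) ^ c * Real.Gamma c) := by
    rw [← hint]; exact hnorm.symm
  have hΓpos : 0 < Real.Gamma c := Real.Gamma_pos_of_pos hc
  have hαc : (0 : ℝ) < (1 / α) ^ c := Real.rpow_pos_of_pos (by positivity) c
  have hcK : c * K = α ^ c / Real.Gamma c := by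
    have h1 : (1 / α : ℝ) ^ c = 1 / α ^ c := by
      rw [Real.div_rpow zero_le_one hα.le, Real.one_rpow]
    rw [h1] at hnorm'
    have hαcp : (0 : ℝ) < α ^ c := Real.rpow_pos_of_pos hα c
    field_simp at hnorm' ⊢
    linarith
  intro x hx
  rw [hformula x hx, hcK]
  ring
end

section
/- Let λ, μ, α, c > 0 with λ < αcμ, and let Γ(s, x) := ∫_x^∞ t^{s−1} e^{−t} dt denote the upper incomplete gamma function and Γ(s) = Γ(s, 0). Define D := (αcμ − λ)·Γ(λ/μ) − αcμ·Γ(λ/μ, αc) + μ·Γ(λ/μ + 1, αc), and define f_C : (0, ∞) → ℝ by f_C(x) = α^{λ/μ} (αcμ − λ) e^{−αx} x^{λ/μ − 1} / D for 0 < x ≤ c, and f_C(x) = (α − λ/(cμ)) · (μ·Γ(λ/μ + 1, αc) − λ·Γ(λ/μ, αc)) · e^{−(α − λ/(cμ))(x − c)} / D for x > c. Then f_C is non-negative, ∫_0^∞ f_C(x) dx = 1, and min(x, c) · f_C(x) = (λ/μ) · ∫_0^x e^{−α(x−y)} f_C(y) dy for all x > 0. -/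
open MeasureTheory Filter Real

/-- The upper incomplete gamma function `Γ(s, x) = ∫_x^∞ t^{s−1} e^{−t} dt`
(so `Γ(s) = Γ(s, 0)`). -/
noncomputable def upperGamma (s x : ℝ) : ℝ :=
  ∫ t in Set.Ioi x, t ^ (s - 1) * Real.exp (-t)

/-- The normalizing constant
`D = (αcμ − λ)Γ(λ/μ) − αcμ Γ(λ/μ, αc) + μ Γ(λ/μ + 1, αc)`. -/
noncomputable def thresholdDensityDenom (lam mu α c : ℝ) : ℝ :=
  (α * c * mu - lam) * upperGamma (lam / mu) 0
    - α * c * mu * upperGamma (lam / mu) (α * c)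
    + mu * upperGamma (lam / mu + 1) (α * c)

/-- The closed-form steady-state density of the `c`-threshold storage process with
exponential(α) marks: gamma-shaped below the threshold and exponential above it. -/
noncomputable def thresholdDensity (lam mu α c : ℝ) (x : ℝ) : ℝ :=
  if x ≤ c then
    α ^ (lam / mu) * (α * c * mu - lam) * Real.exp (-α * x) * x ^ (lam / mu - 1)
      / thresholdDensityDenom lam mu α c
  else
    (α - lam / (c * mu))
      * (mu * upperGamma (lam / mu + 1) (α * c) - lam * upperGamma (lam / mu) (α * c))
      * Real.exp (-(α - lam / (c * mu)) * (x - c))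
      / thresholdDensityDenom lam mu α c

lemma ug_integrableOn (s : ℝ) {x : ℝ} (hx : 0 < x) :
    IntegrableOn (fun t : ℝ => t ^ (s - 1) * Real.exp (-t)) (Set.Ioi x) := by
  have h : (fun t : ℝ => t ^ (s - 1) * Real.exp (-t))
      = fun t : ℝ => Real.exp (-t) * t ^ (s - 1) := by funext t; ring
  rw [h]
  refine integrable_of_isBigO_exp_neg one_half_pos ?_ (Real.Gamma_integrand_isLittleO _).isBigO
  refine (continuous_exp.comp continuous_neg).continuousOn.mul
    (continuousOn_id.rpow_const fun t ht => Or.inl ?_)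
  exact (lt_of_lt_of_le hx ht).ne'

lemma ug_zero {s : ℝ} (hs : 0 < s) : upperGamma s 0 = Real.Gamma s := by
  rw [Real.Gamma_eq_integral hs, upperGamma]
  congr 1; funext t; ring

lemma ug_rec (s : ℝ) {x : ℝ} (hx : 0 < x) :
    upperGamma (s + 1) x = x ^ s * Real.exp (-x) + s * upperGamma s x := by
  set F : ℝ → ℝ := fun t => -(t ^ s * Real.exp (-t)) with hF
  have hderiv : ∀ t ∈ Set.Ici x, HasDerivAt F
      (t ^ s * Real.exp (-t) - s * (t ^ (s - 1) * Real.exp (-t))) t := by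
    intro t ht
    have ht0 : (0 : ℝ) < t := lt_of_lt_of_le hx ht
    have h1 : HasDerivAt (fun u : ℝ => u ^ s) (s * t ^ (s - 1)) t :=
      Real.hasDerivAt_rpow_const (Or.inl ht0.ne')
    have h2 : HasDerivAt (fun u : ℝ => Real.exp (-u)) (-Real.exp (-t)) t := by
      simpa using (hasDerivAt_neg t).exp
    have := (h1.mul h2).neg
    exact this.congr_deriv (by ring)
  have hint : IntegrableOn (fun t : ℝ =>
      t ^ s * Real.exp (-t) - s * (t ^ (s - 1) * Real.exp (-t))) (Set.Ioi x) := by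
    have h1 := ug_integrableOn (s + 1) hx
    simp only [add_sub_cancel_right] at h1
    exact h1.sub ((ug_integrableOn s hx).const_mul s)
  have htend : Tendsto F atTop (nhds 0) := by
    have := (tendsto_rpow_mul_exp_neg_mul_atTop_nhds_zero s 1 one_pos).neg
    simp only [neg_zero] at this
    refine this.congr fun t => ?_
    simp [hF]
  have key := integral_Ioi_of_hasDerivAt_of_tendsto' hderiv hint htend
  have hsplit : ∫ t in Set.Ioi x, (t ^ s * Real.exp (-t) - s * (t ^ (s - 1) * Real.exp (-t)))
      = upperGamma (s + 1) x - s * upperGamma s x := by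
    have h1 := ug_integrableOn (s + 1) hx
    simp only [add_sub_cancel_right] at h1
    rw [MeasureTheory.integral_sub h1 ((ug_integrableOn s hx).const_mul s),
      MeasureTheory.integral_const_mul]
    simp [upperGamma]
  rw [hsplit] at key
  have : F x = -(x ^ s * Real.exp (-x)) := rfl
  rw [this] at key
  linarith

lemma ioc_integrableOn {s : ℝ} (hs : 0 < s) (b : ℝ) :
    IntegrableOn (fun t : ℝ => t ^ (s - 1) * Real.exp (-t)) (Set.Ioc 0 b) := by
  have h : (fun t : ℝ => t ^ (s - 1) * Real.exp (-t))
      = fun t : ℝ => Real.exp (-t) * t ^ (s - 1) := by funext t; ring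
  rw [h]
  exact (Real.GammaIntegral_convergent hs).mono_set Set.Ioc_subset_Ioi_self

lemma gamma_sub_ug {s : ℝ} (hs : 0 < s) {z : ℝ} (hz : 0 < z) :
    ∫ t in Set.Ioc 0 z, t ^ (s - 1) * Real.exp (-t) = Real.Gamma s - upperGamma s z := by
  have h1 := ioc_integrableOn hs z
  have h2 := ug_integrableOn s hz
  have hu := setIntegral_union (Set.Ioc_disjoint_Ioi le_rfl) measurableSet_Ioi h1 h2
  rw [Set.Ioc_union_Ioi_eq_Ioi hz.le] at hu
  have h0 : upperGamma s 0 = ∫ t in Set.Ioi (0:ℝ), t ^ (s - 1) * Real.exp (-t) := rfl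
  have hG := ug_zero hs
  rw [h0, hu] at hG
  rw [upperGamma] at *
  linarith

lemma scaled_gamma {s α b : ℝ} (hs : 0 < s) (hα : 0 < α) (hb : 0 < b) :
    ∫ y in Set.Ioc (0:ℝ) b, Real.exp (-α * y) * y ^ (s - 1)
      = α ^ (-s) * (Real.Gamma s - upperGamma s (α * b)) := by
  have hI : ∫ y in Set.Ioc (0:ℝ) b, Real.exp (-α * y) * y ^ (s - 1)
      = ∫ y in (0:ℝ)..b, Real.exp (-α * y) * y ^ (s - 1) :=
    (intervalIntegral.integral_of_le hb.le).symm
  rw [hI]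
  have hcong : ∫ y in (0:ℝ)..b, Real.exp (-α * y) * y ^ (s - 1)
      = ∫ y in (0:ℝ)..b, α ^ (1 - s) * ((fun t : ℝ => t ^ (s - 1) * Real.exp (-t)) (α * y)) := by
    refine intervalIntegral.integral_congr_ae ?_
    filter_upwards with y hy
    rw [Set.uIoc_of_le hb.le] at hy
    have hy0 : 0 < y := hy.1
    rw [Real.mul_rpow hα.le hy0.le]
    rw [show α ^ (1 - s) * (α ^ (s - 1) * y ^ (s - 1) * Real.exp (-(α * y)))
      = (α ^ (1 - s) * α ^ (s - 1)) * (y ^ (s - 1) * Real.exp (-(α * y))) by ring,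
      ← Real.rpow_add hα]
    simp [neg_mul]
    ring
  have hcml := intervalIntegral.integral_comp_mul_left
    (a := (0:ℝ)) (b := b) (fun t : ℝ => t ^ (s - 1) * Real.exp (-t)) hα.ne'
  rw [hcong, intervalIntegral.integral_const_mul, hcml]
  rw [mul_zero, smul_eq_mul,
    intervalIntegral.integral_of_le (by positivity : (0:ℝ) ≤ α * b),
    gamma_sub_ug hs (by positivity)]
  rw [show α ^ (1 - s) * (α⁻¹ * (Real.Gamma s - upperGamma s (α * b)))
    = (α ^ (1 - s) * α ^ (-1 : ℝ)) * (Real.Gamma s - upperGamma s (α * b)) by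
      rw [Real.rpow_neg_one]; ring, ← Real.rpow_add hα]
  norm_num [show (1:ℝ) - s + -1 = -s by ring]

lemma exp_tail {β : ℝ} (c : ℝ) (hβ : 0 < β) :
    ∫ x in Set.Ioi c, Real.exp (-β * (x - c)) = β⁻¹ := by
  have hfun : (fun x : ℝ => Real.exp (-β * (x - c)))
      = fun x : ℝ => Real.exp (β * c) * Real.exp (-β * x) := by
    funext x; rw [← Real.exp_add]; ring_nf
  have hint : IntegrableOn (fun x : ℝ => Real.exp (-β * (x - c))) (Set.Ioi c) := by
    rw [hfun]; exact (exp_neg_integrableOn_Ioi c hβ).const_mul _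
  have hderiv : ∀ x ∈ Set.Ici c, HasDerivAt (fun x : ℝ => -β⁻¹ * Real.exp (-β * (x - c)))
      (Real.exp (-β * (x - c))) x := by
    intro x _
    have h1 : HasDerivAt (fun x : ℝ => -β * (x - c)) (-β) x := by
      simpa using ((hasDerivAt_id x).sub_const c).const_mul (-β)
    have := ((Real.hasDerivAt_exp _).comp x h1).const_mul (-β⁻¹)
    exact this.congr_deriv (by rw [mul_comm (rexp _) (-β), ← mul_assoc, neg_mul_neg, inv_mul_cancel₀ hβ.ne', one_mul])
  have htend : Tendsto (fun x : ℝ => -β⁻¹ * Real.exp (-β * (x - c))) atTop (nhds 0) := by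
    rw [show (0:ℝ) = -β⁻¹ * 0 by ring]
    refine Tendsto.const_mul _ ?_
    rw [hfun]
    rw [show (0:ℝ) = Real.exp (β * c) * 0 by ring]
    refine Tendsto.const_mul _ ?_
    exact Real.tendsto_exp_atBot.comp (tendsto_id.const_mul_atTop_of_neg (by linarith))
  have key := integral_Ioi_of_hasDerivAt_of_tendsto' hderiv hint htend
  rw [key]
  simp

/-- Under the stability condition `λ < αcμ`, the function `thresholdDensity` is a
probability density on `(0,∞)` and satisfies the Brockwell stationary integral equation
`min(x,c) f_C(x) = (λ/μ) ∫_0^x e^{−α(x−y)} f_C(y) dy` of the `c`-threshold storage process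
with Poisson(λ) arrivals, release rate `μ·min(·,c)` and exponential(α) marks. -/
theorem threshold_storage_density_closed_form
    (lam mu α c : ℝ) (hlam : 0 < lam) (hmu : 0 < mu) (hα : 0 < α) (hc : 0 < c)
    (hstab : lam < α * c * mu) :
    (∀ x : ℝ, 0 < x → 0 ≤ thresholdDensity lam mu α c x)
    ∧ (∫ x in Set.Ioi (0 : ℝ), thresholdDensity lam mu α c x) = 1
    ∧ (∀ x : ℝ, 0 < x →
        min x c * thresholdDensity lam mu α c x
          = (lam / mu)
            * ∫ y in (0 : ℝ)..x, Real.exp (-α * (x - y)) * thresholdDensity lam mu α c y) := by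
  have hr : 0 < lam / mu := div_pos hlam hmu
  set r : ℝ := lam / mu with hrdef
  have hrc : r < α * c := (div_lt_iff₀ hmu).2 (by linarith)
  have hmul : mu * r = lam := by rw [hrdef]; field_simp
  have hac : 0 < α * c := by positivity
  have hrec := ug_rec r hac
  have hM : mu * upperGamma (r + 1) (α * c) - lam * upperGamma r (α * c)
      = mu * ((α * c) ^ r * Real.exp (-(α * c))) := by
    rw [hrec]; linear_combination upperGamma r (α * c) * hmul
  set D := thresholdDensityDenom lam mu α c with hDdef
  have hGnn : 0 ≤ Real.Gamma r - upperGamma r (α * c) := by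
    rw [← gamma_sub_ug hr hac]
    refine setIntegral_nonneg measurableSet_Ioc fun t ht => ?_
    exact mul_nonneg (Real.rpow_nonneg ht.1.le _) (Real.exp_nonneg _)
  have hDeq : D = (α * c * mu - lam) * (Real.Gamma r - upperGamma r (α * c))
      + mu * ((α * c) ^ r * Real.exp (-(α * c))) := by
    rw [hDdef, thresholdDensityDenom, ← hrdef, ug_zero hr, hrec]
    linear_combination upperGamma r (α * c) * hmul
  have hDpos : 0 < D := by
    rw [hDeq]
    have h2 : 0 < mu * ((α * c) ^ r * Real.exp (-(α * c))) := by positivity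
    nlinarith
  set E : ℝ := α - lam / (c * mu) with hEdef
  have hE : E = α - r / c := by rw [hEdef, hrdef, div_div, mul_comm c mu]
  have hEpos : 0 < E := by
    rw [hE, sub_pos, div_lt_iff₀ hc]; linarith
  have hMpos : 0 < mu * upperGamma (r + 1) (α * c) - lam * upperGamma r (α * c) := by
    rw [hM]; positivity
  refine ⟨?_, ?_, ?_⟩
  · -- nonnegativity
    intro x hx
    rw [thresholdDensity]
    split_ifs with h
    · refine div_nonneg ?_ hDpos.le
      have := Real.rpow_nonneg hx.le (r - 1)
      have h1 : (0:ℝ) ≤ α ^ r := Real.rpow_nonneg hα.le r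
      rw [← hrdef]
      exact mul_nonneg (mul_nonneg (mul_nonneg h1
        (by linarith : (0:ℝ) ≤ α * c * mu - lam)) (Real.exp_nonneg _)) this
    · rw [← hrdef, ← hEdef]
      exact div_nonneg (mul_nonneg (mul_nonneg hEpos.le hMpos.le) (Real.exp_nonneg _))
        hDpos.le
  · -- normalization
    have heq1 : Set.EqOn (thresholdDensity lam mu α c)
        (fun y => (α ^ r * (α * c * mu - lam) / D)
          * (Real.exp (-α * y) * y ^ (r - 1))) (Set.Ioc 0 c) := by
      intro y hy
      simp only [thresholdDensity]
      rw [if_pos hy.2, ← hrdef, ← hDdef]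
      ring
    have heq2 : Set.EqOn (thresholdDensity lam mu α c)
        (fun y => (E * (mu * upperGamma (r + 1) (α * c) - lam * upperGamma r (α * c)) / D)
          * Real.exp (-E * (y - c))) (Set.Ioi c) := by
      intro y hy
      simp only [thresholdDensity]
      rw [if_neg (not_le.2 hy), ← hrdef, ← hEdef, ← hDdef]
      ring
    have hrpow_int : IntegrableOn (fun y : ℝ => y ^ (r - 1)) (Set.Ioc 0 c) := by
      rw [← intervalIntegrable_iff_integrableOn_Ioc_of_le hc.le]
      exact intervalIntegral.intervalIntegrable_rpow' (by linarith)
    have hia : IntegrableOn (fun y : ℝ => Real.exp (-α * y) * y ^ (r - 1)) (Set.Ioc 0 c) := by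
      refine Integrable.mono hrpow_int ?_ ?_
      · exact ((Real.measurable_exp.comp (measurable_const.mul measurable_id)).mul
          (measurable_id.pow measurable_const)).aestronglyMeasurable
      · rw [ae_restrict_iff' measurableSet_Ioc]
        filter_upwards with y hy
        have hy0 : 0 < y := hy.1
        rw [Real.norm_eq_abs, Real.norm_eq_abs, abs_mul]
        have h1 : |Real.exp (-α * y)| ≤ 1 := by
          rw [abs_of_pos (Real.exp_pos _)]
          exact Real.exp_le_one_iff.2 (by nlinarith)
        have h2 : (0:ℝ) ≤ |y ^ (r - 1)| := abs_nonneg _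
        nlinarith
    have hexpint : IntegrableOn (fun y : ℝ => Real.exp (-E * (y - c))) (Set.Ioi c) := by
      have hfun : (fun y : ℝ => Real.exp (-E * (y - c)))
          = fun y : ℝ => Real.exp (E * c) * Real.exp (-E * y) := by
        funext y; rw [← Real.exp_add]; ring_nf
      rw [hfun]; exact (exp_neg_integrableOn_Ioi c hEpos).const_mul _
    have hint1 : IntegrableOn (thresholdDensity lam mu α c) (Set.Ioc 0 c) :=
      IntegrableOn.congr_fun (hia.const_mul _) heq1.symm measurableSet_Ioc
    have hint2 : IntegrableOn (thresholdDensity lam mu α c) (Set.Ioi c) :=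
      IntegrableOn.congr_fun (hexpint.const_mul _) heq2.symm measurableSet_Ioi
    have hv1 : ∫ y in Set.Ioc (0:ℝ) c, thresholdDensity lam mu α c y
        = (α ^ r * (α * c * mu - lam) / D)
          * (α ^ (-r) * (Real.Gamma r - upperGamma r (α * c))) := by
      rw [setIntegral_congr_fun measurableSet_Ioc heq1, MeasureTheory.integral_const_mul,
        scaled_gamma hr hα hc]
    have hv2 : ∫ y in Set.Ioi c, thresholdDensity lam mu α c y
        = (E * (mu * upperGamma (r + 1) (α * c) - lam * upperGamma r (α * c)) / D) * E⁻¹ := by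
      rw [setIntegral_congr_fun measurableSet_Ioi heq2, MeasureTheory.integral_const_mul,
        exp_tail c hEpos]
    rw [← Set.Ioc_union_Ioi_eq_Ioi hc.le,
      setIntegral_union (Set.Ioc_disjoint_Ioi le_rfl) measurableSet_Ioi hint1 hint2,
      hv1, hv2, hM]
    have hαr : α ^ r * α ^ (-r) = 1 := by
      rw [← Real.rpow_add hα]; simp
    rw [show α ^ r * (α * c * mu - lam) / D
          * (α ^ (-r) * (Real.Gamma r - upperGamma r (α * c)))
        = (α ^ r * α ^ (-r))
          * ((α * c * mu - lam) * (Real.Gamma r - upperGamma r (α * c)) / D) by ring,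
      hαr, one_mul,
      show E * (mu * ((α * c) ^ r * Real.exp (-(α * c)))) / D * E⁻¹
        = (E * E⁻¹) * (mu * ((α * c) ^ r * Real.exp (-(α * c))) / D) by ring,
      mul_inv_cancel₀ hEpos.ne', one_mul, ← add_div, ← hDeq, div_self hDpos.ne']
  · -- integral equation
    intro x hx
    rcases le_or_gt x c with hxc | hxc
    · -- below threshold
      rw [min_eq_left hxc]
      have hcong : ∫ y in (0:ℝ)..x, Real.exp (-α * (x - y)) * thresholdDensity lam mu α c y
          = ∫ y in (0:ℝ)..x,
              (α ^ r * (α * c * mu - lam) * Real.exp (-α * x) / D) * y ^ (r - 1) := by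
        refine intervalIntegral.integral_congr_ae ?_
        filter_upwards with y hy
        rw [Set.uIoc_of_le hx.le] at hy
        have hyc : y ≤ c := le_trans hy.2 hxc
        simp only [thresholdDensity]
        rw [if_pos hyc, ← hrdef, ← hDdef]
        rw [show Real.exp (-α * (x - y))
              * (α ^ r * (α * c * mu - lam) * Real.exp (-α * y) * y ^ (r - 1) / D)
            = α ^ r * (α * c * mu - lam)
              * (Real.exp (-α * (x - y)) * Real.exp (-α * y)) * y ^ (r - 1) / D by ring,
          ← Real.exp_add, show -α * (x - y) + -α * y = -α * x by ring]
        ring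
      rw [hcong, intervalIntegral.integral_const_mul,
        integral_rpow (Or.inl (by linarith : (-1:ℝ) < r - 1)),
        show r - 1 + 1 = r by ring, Real.zero_rpow hr.ne']
      simp only [thresholdDensity]
      rw [if_pos hxc, ← hrdef, ← hDdef]
      have hxr : x ^ r = x ^ (r - 1) * x := by
        rw [Real.rpow_sub_one hx.ne', div_mul_cancel₀ _ hx.ne']
      rw [hxr]
      field_simp
      ring
    · -- above threshold
      rw [min_eq_right hxc.le]
      have hEqOn1 : Set.EqOn
          (fun y => Real.exp (-α * (x - y)) * thresholdDensity lam mu α c y)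
          (fun y => (α ^ r * (α * c * mu - lam) * Real.exp (-α * x) / D) * y ^ (r - 1))
          (Set.Ioc 0 c) := by
        intro y hy
        simp only [thresholdDensity]
        rw [if_pos hy.2, ← hrdef, ← hDdef]
        rw [show Real.exp (-α * (x - y))
              * (α ^ r * (α * c * mu - lam) * Real.exp (-α * y) * y ^ (r - 1) / D)
            = α ^ r * (α * c * mu - lam)
              * (Real.exp (-α * (x - y)) * Real.exp (-α * y)) * y ^ (r - 1) / D by ring,
          ← Real.exp_add, show -α * (x - y) + -α * y = -α * x by ring]
        ring
      have hEqOn2 : Set.EqOn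
          (fun y => Real.exp (-α * (x - y)) * thresholdDensity lam mu α c y)
          (fun y => (E * (mu * ((α * c) ^ r * Real.exp (-(α * c)))) / D)
            * (Real.exp (-α * (x - y)) * Real.exp (-E * (y - c)))) (Set.Ioc c x) := by
        intro y hy
        simp only [thresholdDensity]
        rw [if_neg (not_le.2 hy.1), ← hrdef, ← hEdef, ← hDdef, hM]
        ring
      have hrpow_int : IntegrableOn (fun y : ℝ => y ^ (r - 1)) (Set.Ioc 0 c) := by
        rw [← intervalIntegrable_iff_integrableOn_Ioc_of_le hc.le]
        exact intervalIntegral.intervalIntegrable_rpow' (by linarith)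
      have hii1 : IntervalIntegrable
          (fun y => Real.exp (-α * (x - y)) * thresholdDensity lam mu α c y) volume 0 c := by
        rw [intervalIntegrable_iff_integrableOn_Ioc_of_le hc.le]
        exact IntegrableOn.congr_fun (hrpow_int.const_mul _) hEqOn1.symm measurableSet_Ioc
      have hii2 : IntervalIntegrable
          (fun y => Real.exp (-α * (x - y)) * thresholdDensity lam mu α c y) volume c x := by
        rw [intervalIntegrable_iff_integrableOn_Ioc_of_le hxc.le]
        refine IntegrableOn.congr_fun ?_ hEqOn2.symm measurableSet_Ioc
        apply Continuous.integrableOn_Ioc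
        exact continuous_const.mul
          ((Real.continuous_exp.comp (continuous_const.mul (continuous_const.sub continuous_id))).mul
            (Real.continuous_exp.comp (continuous_const.mul (continuous_id.sub continuous_const))))
      rw [← intervalIntegral.integral_add_adjacent_intervals hii1 hii2]
      have hI1 : ∫ y in (0:ℝ)..c, Real.exp (-α * (x - y)) * thresholdDensity lam mu α c y
          = (α ^ r * (α * c * mu - lam) * Real.exp (-α * x) / D) * (c ^ r / r) := by
        have : ∫ y in (0:ℝ)..c, Real.exp (-α * (x - y)) * thresholdDensity lam mu α c y
            = ∫ y in (0:ℝ)..c,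
                (α ^ r * (α * c * mu - lam) * Real.exp (-α * x) / D) * y ^ (r - 1) := by
          refine intervalIntegral.integral_congr_ae ?_
          filter_upwards with y hy
          rw [Set.uIoc_of_le hc.le] at hy
          exact hEqOn1 hy
        rw [this, intervalIntegral.integral_const_mul,
          integral_rpow (Or.inl (by linarith : (-1:ℝ) < r - 1)),
          show r - 1 + 1 = r by ring, Real.zero_rpow hr.ne']
        ring
      have hkpos : 0 < r / c := div_pos hr hc
      have hexpI : ∫ y in c..x, Real.exp (r / c * y)
          = (r / c)⁻¹ * (Real.exp (r / c * x) - Real.exp (r / c * c)) := by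
        have hcml := intervalIntegral.integral_comp_mul_left
          (a := c) (b := x) Real.exp hkpos.ne'
        rw [hcml, smul_eq_mul, integral_exp]
      have hI2 : ∫ y in c..x, Real.exp (-α * (x - y)) * thresholdDensity lam mu α c y
          = (E * (mu * ((α * c) ^ r * Real.exp (-(α * c)))) / D)
            * ((Real.exp (-α * x) * Real.exp (E * c))
              * ((r / c)⁻¹ * (Real.exp (r / c * x) - Real.exp (r / c * c)))) := by
        have h1 : ∫ y in c..x, Real.exp (-α * (x - y)) * thresholdDensity lam mu α c y
            = ∫ y in c..x, ((E * (mu * ((α * c) ^ r * Real.exp (-(α * c)))) / D)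
                * (Real.exp (-α * x) * Real.exp (E * c))) * Real.exp (r / c * y) := by
          refine intervalIntegral.integral_congr_ae ?_
          filter_upwards with y hy
          rw [Set.uIoc_of_le hxc.le] at hy
          rw [show Real.exp (-α * (x - y)) * thresholdDensity lam mu α c y
              = E * (mu * ((α * c) ^ r * Real.exp (-(α * c)))) / D
                * (Real.exp (-α * (x - y)) * Real.exp (-E * (y - c))) from hEqOn2 hy]
          rw [show (E * (mu * ((α * c) ^ r * Real.exp (-(α * c)))) / D)
                * (Real.exp (-α * (x - y)) * Real.exp (-E * (y - c)))
              = (E * (mu * ((α * c) ^ r * Real.exp (-(α * c)))) / D)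
                * (Real.exp (-α * (x - y)) * Real.exp (-E * (y - c))) by ring]
          rw [show Real.exp (-α * (x - y)) * Real.exp (-E * (y - c))
              = (Real.exp (-α * x) * Real.exp (E * c)) * Real.exp ((α - E) * y) by
            rw [← Real.exp_add, ← Real.exp_add, ← Real.exp_add]; congr 1; ring]
          rw [show α - E = r / c by rw [hE]; ring]
          ring
        rw [h1, intervalIntegral.integral_const_mul, hexpI]
        ring
      rw [hI1, hI2]
      -- final scalar identity
      simp only [thresholdDensity]
      rw [if_neg (not_le.2 hxc), ← hrdef, ← hEdef, ← hDdef, hM]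
      have e1 : Real.exp (-E * (x - c))
          = Real.exp (-α * x) * Real.exp (r / c * x) * Real.exp (E * c) := by
        rw [← Real.exp_add, ← Real.exp_add]; congr 1
        rw [hE]; field_simp; ring
      have e2 : Real.exp (r / c * c) = Real.exp r := by
        congr 1; field_simp
      have e3 : Real.exp (E * c) * Real.exp r = Real.exp (α * c) := by
        rw [← Real.exp_add]; congr 1
        rw [hE]; field_simp; ring
      have e4 : Real.exp (-(α * c)) * Real.exp (α * c) = 1 := by
        rw [← Real.exp_add]; simp
      have hmulr : (α * c) ^ r = α ^ r * c ^ r := Real.mul_rpow hα.le hc.le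
      have hcE : c * E * mu = α * c * mu - lam := by
        rw [hE]
        have hdc : r / c * c = r := div_mul_cancel₀ r hc.ne'
        linear_combination (-mu) * hdc + (-1) * hmul
      rw [e1, e2, hmulr]
      have hcr : c ^ r = c ^ (r - 1) * c := by
        rw [Real.rpow_sub_one hc.ne', div_mul_cancel₀ _ hc.ne']
      have hW : mu * mu⁻¹ = 1 := mul_inv_cancel₀ hmu.ne'
      have hV : c * c⁻¹ = 1 := mul_inv_cancel₀ hc.ne'
      have key : c * E * mu * (Real.exp (-(α * c)) * (Real.exp (E * c) * Real.exp r))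
          = α * c * mu - lam := by rw [e3, e4, mul_one, hcE]
      have hr' : r * r⁻¹ = 1 := mul_inv_cancel₀ hr.ne'
      clear_value E D r
      linear_combination
        ((α ^ r * c ^ r) * Real.exp (-α * x) * D⁻¹) * key
        - ((α ^ r * c ^ r) * (α * c * mu - lam) * Real.exp (-α * x) * D⁻¹
          + c * E * mu * (α ^ r * c ^ r) * Real.exp (-(α * c)) * Real.exp (-α * x)
            * Real.exp (E * c) * D⁻¹ * (Real.exp (r / c * x) - Real.exp r)) * hr'
        - (E * mu * (α ^ r * c ^ r) * Real.exp (-(α * c)) * Real.exp (-α * x)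
            * Real.exp (E * c) * D⁻¹ * r * r⁻¹ * (Real.exp (r / c * x) - Real.exp r)) * inv_inv c
end

section
/- Let λ, μ, α, c > 0, and let Γ(s, x) := ∫_x^∞ t^{s−1} e^{−t} dt denote the upper incomplete gamma function and Γ(s) = Γ(s, 0). Define f_B : (0, c] → ℝ by f_B(x) = α^{λ/μ} x^{λ/μ − 1} e^{−αx} / (Γ(λ/μ) − Γ(λ/μ, αc)). Then f_B is non-negative, ∫_0^c f_B(x) dx = 1, and x · f_B(x) = (λ/μ) · ∫_0^x e^{−α(x−y)} f_B(y) dy for all x ∈ (0, c]. -/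
open MeasureTheory Filter Real

/-- The Gamma(λ/μ, α) density truncated and renormalized to `(0, c]`:
`f_B(x) = α^{λ/μ} x^{λ/μ−1} e^{−αx} / (Γ(λ/μ) − Γ(λ/μ, αc))`. -/
noncomputable def truncatedGammaDensity (lam mu α c : ℝ) (x : ℝ) : ℝ :=
  α ^ (lam / mu) * x ^ (lam / mu - 1) * Real.exp (-α * x)
    / (upperGamma (lam / mu) 0 - upperGamma (lam / mu) (α * c))

lemma gammaIntegrand_integrableOn {s : ℝ} (hs : 0 < s) :
    MeasureTheory.IntegrableOn (fun t : ℝ => t ^ (s - 1) * Real.exp (-t)) (Set.Ioi 0) := by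
  have := Real.GammaIntegral_convergent hs
  exact this.congr_fun (fun t _ => mul_comm _ _) measurableSet_Ioi

lemma upperGamma_sub (s b : ℝ) (hs : 0 < s) (hb : 0 ≤ b) :
    upperGamma s 0 - upperGamma s b
      = ∫ t in (0:ℝ)..b, t ^ (s - 1) * Real.exp (-t) := by
  have hi : MeasureTheory.IntegrableOn (fun t : ℝ => t ^ (s - 1) * Real.exp (-t))
      (Set.Ioi 0) := gammaIntegrand_integrableOn hs
  have hsplit : upperGamma s 0
      = (∫ t in Set.Ioc (0:ℝ) b, t ^ (s - 1) * Real.exp (-t)) + upperGamma s b := by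
    unfold upperGamma
    rw [← MeasureTheory.setIntegral_union]
    · rw [Set.Ioc_union_Ioi_eq_Ioi hb]
    · exact Set.Ioc_disjoint_Ioi le_rfl
    · exact measurableSet_Ioi
    · exact hi.mono_set Set.Ioc_subset_Ioi_self
    · exact hi.mono_set (Set.Ioi_subset_Ioi hb)
  rw [intervalIntegral.integral_of_le hb]
  linarith [hsplit]

lemma upperGamma_sub_pos (s b : ℝ) (hs : 0 < s) (hb : 0 < b) :
    0 < upperGamma s 0 - upperGamma s b := by
  rw [upperGamma_sub s b hs hb.le]
  apply intervalIntegral.intervalIntegral_pos_of_pos_on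
  · rw [intervalIntegrable_iff_integrableOn_Ioc_of_le hb.le]
    exact (gammaIntegrand_integrableOn hs).mono_set Set.Ioc_subset_Ioi_self
  · intro t ht
    exact mul_pos (Real.rpow_pos_of_pos ht.1 _) (Real.exp_pos _)
  · exact hb

/-- The truncated gamma density is a probability density on `(0, c]` and satisfies the
stationary integral equation `x f_B(x) = (λ/μ) ∫_0^x e^{−α(x−y)} f_B(y) dy` of the
finite-capacity (blocking) storage process with Poisson(λ) arrivals, proportional release
rate `μ`, exponential(α) marks and capacity `c`. -/
theorem finite_storage_density_closed_form
    (lam mu α c : ℝ) (hlam : 0 < lam) (hmu : 0 < mu) (hα : 0 < α) (hc : 0 < c) :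
    (∀ x : ℝ, 0 < x → x ≤ c → 0 ≤ truncatedGammaDensity lam mu α c x)
    ∧ (∫ x in Set.Ioc (0 : ℝ) c, truncatedGammaDensity lam mu α c x) = 1
    ∧ (∀ x : ℝ, 0 < x → x ≤ c →
        x * truncatedGammaDensity lam mu α c x
          = (lam / mu)
            * ∫ y in (0 : ℝ)..x,
                Real.exp (-α * (x - y)) * truncatedGammaDensity lam mu α c y) := by
  set s := lam / mu with hsdef
  have hs : 0 < s := div_pos hlam hmu
  set D := upperGamma s 0 - upperGamma s (α * c) with hDdef
  have hD : 0 < D := upperGamma_sub_pos s (α * c) hs (mul_pos hα hc)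
  have hnum : ∀ x : ℝ, 0 ≤ x →
      α ^ s * x ^ (s - 1) * Real.exp (-α * x)
        = α * ((α * x) ^ (s - 1) * Real.exp (-(α * x))) := by
    intro x hx
    rw [Real.mul_rpow hα.le hx, neg_mul]
    rw [show α ^ s = α ^ (s - 1) * α by
      rw [← Real.rpow_add_one hα.ne' (s - 1), show s - 1 + 1 = s by ring]]
    ring
  have hsub : (∫ x in (0:ℝ)..c, α ^ s * x ^ (s - 1) * Real.exp (-α * x)) = D := by
    rw [hDdef, upperGamma_sub s (α * c) hs (mul_pos hα hc).le]
    have : (∫ x in (0:ℝ)..c, α ^ s * x ^ (s - 1) * Real.exp (-α * x))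
        = ∫ x in (0:ℝ)..c, α * ((α * x) ^ (s - 1) * Real.exp (-(α * x))) := by
      apply intervalIntegral.integral_congr
      intro x hx
      rw [Set.uIcc_of_le hc.le] at hx
      exact hnum x hx.1
    rw [this, intervalIntegral.integral_const_mul,
      intervalIntegral.integral_comp_mul_left (fun t => t ^ (s - 1) * Real.exp (-t)) hα.ne',
      mul_zero, smul_eq_mul, ← mul_assoc, mul_inv_cancel₀ hα.ne', one_mul]
  refine ⟨?_, ?_, ?_⟩
  · intro x hx0 _
    unfold truncatedGammaDensity
    rw [← hsdef, ← hDdef]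
    apply div_nonneg _ hD.le
    positivity
  · rw [← intervalIntegral.integral_of_le hc.le]
    unfold truncatedGammaDensity
    rw [← hsdef, ← hDdef]
    rw [intervalIntegral.integral_div, hsub, div_self hD.ne']
  · intro x hx0 hxc
    have hpow : (∫ y in (0:ℝ)..x, y ^ (s - 1)) = x ^ s / s := by
      rw [integral_rpow (Or.inl (by linarith : (-1:ℝ) < s - 1))]
      rw [show s - 1 + 1 = s by ring, Real.zero_rpow hs.ne', sub_zero]
    have hcongr : (∫ y in (0:ℝ)..x,
        Real.exp (-α * (x - y)) * truncatedGammaDensity lam mu α c y)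
        = ∫ y in (0:ℝ)..x, (α ^ s * Real.exp (-α * x) / D) * y ^ (s - 1) := by
      apply intervalIntegral.integral_congr
      intro y _
      simp only [truncatedGammaDensity, ← hsdef, ← hDdef]
      have hexp : Real.exp (-α * (x - y)) * Real.exp (-α * y) = Real.exp (-α * x) := by
        rw [← Real.exp_add]; congr 1; ring
      rw [← mul_div_assoc, div_mul_eq_mul_div]
      congr 1
      linear_combination α ^ s * y ^ (s - 1) * hexp
    rw [hcongr, intervalIntegral.integral_const_mul, hpow]
    unfold truncatedGammaDensity
    rw [← hsdef, ← hDdef]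
    have hxpow : x * x ^ (s - 1) = x ^ s := by
      rw [mul_comm, ← Real.rpow_add_one hx0.ne' (s - 1), show s - 1 + 1 = s by ring]
    simp only [neg_mul]
    field_simp
    linear_combination hxpow
end

section
/- Let λ, μ, c > 0 with λ·E[M] < cμ. Let X be a non-negative random variable with probability density f and E[X] < ∞, and let M be a non-negative integrable random variable independent of X. Suppose that min(x, c) · f(x) = (λ/μ) · ∫_0^x P(M > x − y) f(y) dy for Lebesgue-almost every x > 0, and that P(X ≤ c) > 0. Then P(X > c) ≤ ((λ/μ)·E[M] − (λ/(λ + μ))·E[min(M, c)]) / (c − (λ/(λ + μ))·E[min(M, c)]). -/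
open MeasureTheory Filter Real ProbabilityTheory

/-- Tonelli on the triangle `{(x,y) : x ∈ s, 0 < y < x}`. -/
lemma tri_swap (s : Set ℝ) (H F : ℝ → ENNReal)
    (hH : Measurable H) (hF : Measurable F) :
    ∫⁻ x in s, ∫⁻ y in Set.Ioo 0 x, H (x - y) * F y
      = ∫⁻ y in Set.Ioi 0, (∫⁻ x in s ∩ Set.Ioi y, H (x - y)) * F y := by
  set K : ℝ → ℝ → ENNReal := fun x y => if y < x then H (x - y) * F y else 0 with hK
  have hKmeas : Measurable (Function.uncurry K) := by
    apply Measurable.ite (measurableSet_lt measurable_snd measurable_fst)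
    · exact ((hH.comp (measurable_fst.sub measurable_snd)).mul (hF.comp measurable_snd))
    · exact measurable_const
  have step1 : ∀ x : ℝ, ∫⁻ y in Set.Ioo 0 x, H (x - y) * F y
      = ∫⁻ y in Set.Ioi 0, K x y := by
    intro x
    have : K x = (Set.Iio x).indicator (fun y => H (x - y) * F y) := by
      ext y; simp [hK, Set.indicator_apply]
    rw [this, lintegral_indicator measurableSet_Iio,
      Measure.restrict_restrict measurableSet_Iio, Set.inter_comm, Set.Ioi_inter_Iio]
  have step3 : ∀ y : ℝ, ∫⁻ x in s, K x y
      = (∫⁻ x in s ∩ Set.Ioi y, H (x - y)) * F y := by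
    intro y
    have : (fun x => K x y) = (Set.Ioi y).indicator (fun x => H (x - y) * F y) := by
      ext x; simp [hK, Set.indicator_apply]
    rw [this, lintegral_indicator measurableSet_Ioi,
      Measure.restrict_restrict measurableSet_Ioi, Set.inter_comm]
    exact lintegral_mul_const _ (hH.comp (measurable_id.sub_const y))
  calc ∫⁻ x in s, ∫⁻ y in Set.Ioo 0 x, H (x - y) * F y
      = ∫⁻ x in s, ∫⁻ y in Set.Ioi 0, K x y := lintegral_congr fun x => step1 x
    _ = ∫⁻ y in Set.Ioi 0, ∫⁻ x in s, K x y := lintegral_lintegral_swap hKmeas.aemeasurable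
    _ = _ := lintegral_congr fun y => step3 y

/-- Translation invariance of the Lebesgue integral. -/
lemma shift_lint (y : ℝ) (H : ℝ → ENNReal) (s : Set ℝ) :
    ∫⁻ x in s, H (x - y) = ∫⁻ u in (fun u => u + y) ⁻¹' s, H u := by
  have := (measurePreserving_add_right volume y).setLIntegral_comp_preimage_emb
    (measurableEmbedding_addRight y) (fun x => H (x - y)) s
  simpa using this.symm

/-- Closed-form upper bound on the exceedance probability of the stationary `c`-threshold
storage process: under the stability condition `λE[M] < cμ`,
`P(X > c) ≤ ((λ/μ)E[M] − (λ/(λ+μ))E[min(M,c)]) / (c − (λ/(λ+μ))E[min(M,c)])`. -/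
theorem threshold_storage_exceedance_upper_bound
    {Ω : Type*} [MeasurableSpace Ω] (P : Measure Ω) [IsProbabilityMeasure P]
    (lam mu c : ℝ) (hlam : 0 < lam) (hmu : 0 < mu) (hc : 0 < c)
    (X M : Ω → ℝ) (hX : Measurable X) (hM : Measurable M)
    (hX0 : ∀ ω, 0 ≤ X ω) (hM0 : ∀ ω, 0 ≤ M ω)
    (hXint : Integrable X P) (hMint : Integrable M P)
    (hindep : IndepFun X M P)
    (hstab : lam * (∫ ω, M ω ∂P) < c * mu)
    (f : ℝ → ℝ) (hf : Measurable f) (hf0 : ∀ y, 0 ≤ f y)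
    (hdens : Measure.map X P = volume.withDensity (fun y => ENNReal.ofReal (f y)))
    (heq : ∀ᵐ x ∂(volume.restrict (Set.Ioi (0 : ℝ))),
      min x c * f x
        = (lam / mu) * ∫ y in (0 : ℝ)..x, (P {ω | x - y < M ω}).toReal * f y)
    (hpos : 0 < (P {ω | X ω ≤ c}).toReal) :
    (P {ω | c < X ω}).toReal
      ≤ ((lam / mu) * (∫ ω, M ω ∂P)
            - (lam / (lam + mu)) * ∫ ω, min (M ω) c ∂P)
        / (c - (lam / (lam + mu)) * ∫ ω, min (M ω) c ∂P) := by
  -- Notation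
  set EM : ℝ := ∫ ω, M ω ∂P with hEMdef
  set Emc : ℝ := ∫ ω, min (M ω) c ∂P with hEmcdef
  set G : ℝ → ENNReal := fun t => P {ω | t < M ω} with hGdef
  set F : ℝ → ENNReal := fun y => ENNReal.ofReal (f y) with hFdef
  have hFmeas : Measurable F := ENNReal.measurable_ofReal.comp hf
  have hGanti : Antitone G := by
    intro t t' h
    exact measure_mono (fun ω hω => lt_of_le_of_lt h hω)
  have hGmeas : Measurable G := hGanti.measurable
  have hGle1 : ∀ t, G t ≤ 1 := fun t => prob_le_one
  have hGne : ∀ t, G t ≠ ⊤ := fun t => measure_ne_top P _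
  -- map identities
  have hmap : ∀ s : Set ℝ, MeasurableSet s → P (X ⁻¹' s) = ∫⁻ y in s, F y := by
    intro s hs
    rw [← Measure.map_apply hX hs, hdens, withDensity_apply _ hs]
  have htot : ∫⁻ y, F y = 1 := by
    have := hmap Set.univ MeasurableSet.univ
    simpa [Measure.restrict_univ] using this.symm
  have hfint : Integrable f := by
    refine ⟨hf.aestronglyMeasurable, ?_⟩
    rw [hasFiniteIntegral_iff_ofReal (ae_of_all _ hf0)]
    rw [htot]; exact ENNReal.one_lt_top
  -- layer cake for M
  have hEM' : ∫⁻ t in Set.Ioi 0, G t = ENNReal.ofReal EM := by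
    rw [← lintegral_eq_lintegral_meas_lt P (ae_of_all _ hM0) hM.aemeasurable,
      ← ofReal_integral_eq_lintegral_ofReal hMint (ae_of_all _ hM0)]
  -- min (M ω) c integrable and its layer cake
  have hMcint : Integrable (fun ω => min (M ω) c) P := by
    refine Integrable.mono hMint (hM.min measurable_const).aestronglyMeasurable ?_
    refine ae_of_all _ fun ω => ?_
    rw [Real.norm_eq_abs, Real.norm_eq_abs, abs_of_nonneg (le_min (hM0 ω) hc.le),
      abs_of_nonneg (hM0 ω)]
    exact min_le_left _ _
  have hEmc' : ∫⁻ t in Set.Ioo 0 c, G t = ENNReal.ofReal Emc := by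
    have h1 : ENNReal.ofReal Emc = ∫⁻ t in Set.Ioi 0, P {a | t < min (M a) c} := by
      rw [hEmcdef, ofReal_integral_eq_lintegral_ofReal hMcint
        (ae_of_all _ fun ω => le_min (hM0 ω) hc.le)]
      exact lintegral_eq_lintegral_meas_lt P (ae_of_all _ fun ω => le_min (hM0 ω) hc.le)
        ((hM.min measurable_const).aemeasurable)
    rw [h1, ← Set.Ioo_union_Ici_eq_Ioi hc, lintegral_union measurableSet_Ici
      ((Set.Iio_disjoint_Ici le_rfl).mono_left Set.Ioo_subset_Iio_self)]
    have h2 : ∫⁻ t in Set.Ici c, P {a | t < min (M a) c} = 0 := by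
      rw [setLIntegral_congr_fun measurableSet_Ici
        (fun t (ht : c ≤ t) => ?_), lintegral_zero]
      have : {a | t < min (M a) c} = (∅ : Set Ω) := by
        ext a; simp only [Set.mem_setOf_eq, Set.mem_empty_iff_false, iff_false, not_lt]
        exact le_trans (min_le_right _ _) ht
      rw [this]; exact measure_empty
    rw [h2, add_zero]
    refine (setLIntegral_congr_fun measurableSet_Ioo
      (fun t ht => ?_)).symm
    congr 1; ext a; simp only [Set.mem_setOf_eq, lt_min_iff, and_iff_left ht.2]
  -- probability identities
  have hLp : P {ω | c < X ω} = ∫⁻ y in Set.Ioi c, F y := hmap _ measurableSet_Ioi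
  have hQ : P {ω | X ω ≤ c} = ∫⁻ y in Set.Ioo 0 c, F y := by
    have h0 : P {ω | X ω ≤ c} = ∫⁻ y in Set.Iic c, F y := hmap _ measurableSet_Iic
    have hzero : ∫⁻ y in Set.Iic 0, F y = 0 := by
      have h1 : P (X ⁻¹' Set.Iic 0) = ∫⁻ y in Set.Iic 0, F y := hmap _ measurableSet_Iic
      refine le_antisymm ?_ zero_le
      rw [← h1]
      calc P (X ⁻¹' Set.Iic 0) ≤ P (X ⁻¹' {0}) :=
            measure_mono fun ω hω => le_antisymm hω (hX0 ω)
        _ = ∫⁻ y in {(0:ℝ)}, F y := hmap _ (measurableSet_singleton 0)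
        _ = 0 := by rw [Measure.restrict_singleton]; simp
    have hIooIoc : volume.restrict (Set.Ioc (0:ℝ) c) = volume.restrict (Set.Ioo (0:ℝ) c) :=
      (Measure.restrict_congr_set Ioo_ae_eq_Ioc).symm
    rw [h0, ← Set.Iic_union_Ioc_eq_Iic hc.le,
      lintegral_union measurableSet_Ioc (Set.Iic_disjoint_Ioc le_rfl), hzero, zero_add,
      hIooIoc]
  -- per-x integrability of the convolution integrand
  have hGR : ∀ x : ℝ, Measurable fun y => (G (x - y)).toReal :=
    fun x => ENNReal.measurable_toReal.comp (hGmeas.comp (measurable_const.sub measurable_id))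
  have hint_inner : ∀ x : ℝ,
      IntegrableOn (fun y => (P {ω | x - y < M ω}).toReal * f y) (Set.Ioc 0 x) := by
    intro x
    refine Integrable.mono hfint.restrict ((hGR x).mul hf).aestronglyMeasurable
      (ae_of_all _ fun y => ?_)
    rw [Real.norm_eq_abs, Real.norm_eq_abs,
      abs_of_nonneg (mul_nonneg ENNReal.toReal_nonneg (hf0 y)), abs_of_nonneg (hf0 y)]
    calc (G (x - y)).toReal * f y ≤ 1 * f y := by
          refine mul_le_mul_of_nonneg_right ?_ (hf0 y)
          simpa using ENNReal.toReal_mono ENNReal.one_ne_top (hGle1 (x - y))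
      _ = f y := one_mul _
  -- ENNReal form of the stationarity equation
  have heq' : ∀ᵐ x ∂(volume.restrict (Set.Ioi (0:ℝ))),
      ENNReal.ofReal (min x c) * F x
        = ENNReal.ofReal (lam / mu) * ∫⁻ y in Set.Ioo 0 x, G (x - y) * F y := by
    filter_upwards [heq, ae_restrict_mem measurableSet_Ioi] with x hx hx0
    have h0x : (0:ℝ) ≤ x := le_of_lt hx0
    have hIoc : ∫ y in (0:ℝ)..x, (P {ω | x - y < M ω}).toReal * f y
        = ∫ y in Set.Ioc 0 x, (G (x - y)).toReal * f y := intervalIntegral.integral_of_le h0x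
    have hofReal : ENNReal.ofReal (∫ y in Set.Ioc 0 x, (G (x - y)).toReal * f y)
        = ∫⁻ y in Set.Ioc 0 x, G (x - y) * F y := by
      rw [ofReal_integral_eq_lintegral_ofReal (hint_inner x)
        (ae_of_all _ fun y => mul_nonneg ENNReal.toReal_nonneg (hf0 y))]
      refine lintegral_congr fun y => ?_
      rw [ENNReal.ofReal_mul ENNReal.toReal_nonneg, ENNReal.ofReal_toReal (hGne _)]
    have hIoo : ∫⁻ y in Set.Ioc 0 x, G (x - y) * F y
        = ∫⁻ y in Set.Ioo 0 x, G (x - y) * F y := by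
      rw [← Measure.restrict_congr_set Ioo_ae_eq_Ioc]
    calc ENNReal.ofReal (min x c) * F x
        = ENNReal.ofReal (min x c * f x) := (ENNReal.ofReal_mul (le_min h0x hc.le)).symm
      _ = ENNReal.ofReal ((lam / mu) * ∫ y in (0:ℝ)..x, (P {ω | x - y < M ω}).toReal * f y) := by
          rw [hx]
      _ = ENNReal.ofReal (lam / mu)
            * ENNReal.ofReal (∫ y in Set.Ioc 0 x, (G (x - y)).toReal * f y) := by
          rw [hIoc, ENNReal.ofReal_mul (div_pos hlam hmu).le]
      _ = _ := by rw [hofReal, hIoo]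
  -- shift identity on Ioi
  have hshift : ∀ y : ℝ, 0 < y →
      ∫⁻ x in Set.Ioi 0 ∩ Set.Ioi y, G (x - y) = ENNReal.ofReal EM := by
    intro y hy
    have h1 : Set.Ioi (0:ℝ) ∩ Set.Ioi y = Set.Ioi y := by
      rw [Set.inter_eq_right]; exact fun x hx => lt_trans hy hx
    have h2 : (fun u => u + y) ⁻¹' Set.Ioi y = Set.Ioi (0:ℝ) := by
      ext u; simp [Set.mem_preimage]
    rw [h1, shift_lint y G (Set.Ioi y), h2, hEM']
  set L1 : ENNReal := ∫⁻ x in Set.Ioc 0 c, ENNReal.ofReal x * F x with hL1def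
  -- KEY 1 : L1 + c · P(X > c) ≤ (λ/μ) E[M]
  have key1 : L1 + ENNReal.ofReal c * P {ω | c < X ω}
      ≤ ENNReal.ofReal (lam / mu) * ENNReal.ofReal EM := by
    have hsplit : ∫⁻ x in Set.Ioi 0, ENNReal.ofReal (min x c) * F x
        = L1 + ENNReal.ofReal c * P {ω | c < X ω} := by
      rw [← Set.Ioc_union_Ioi_eq_Ioi hc.le,
        lintegral_union measurableSet_Ioi (Set.Ioc_disjoint_Ioi le_rfl)]
      congr 1
      · exact setLIntegral_congr_fun measurableSet_Ioc
          (fun x hx => by rw [min_eq_left hx.2])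
      · rw [hLp, ← lintegral_const_mul' _ _ ENNReal.ofReal_ne_top]
        exact setLIntegral_congr_fun measurableSet_Ioi
          (fun x hx => by rw [min_eq_right (le_of_lt hx)])
    rw [← hsplit]
    calc ∫⁻ x in Set.Ioi 0, ENNReal.ofReal (min x c) * F x
        = ENNReal.ofReal (lam / mu)
            * ∫⁻ x in Set.Ioi 0, ∫⁻ y in Set.Ioo 0 x, G (x - y) * F y := by
          rw [← lintegral_const_mul' _ _ ENNReal.ofReal_ne_top]
          exact lintegral_congr_ae heq'
      _ = ENNReal.ofReal (lam / mu)
            * ∫⁻ y in Set.Ioi 0, (∫⁻ x in Set.Ioi 0 ∩ Set.Ioi y, G (x - y)) * F y := by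
          rw [tri_swap _ G F hGmeas hFmeas]
      _ = ENNReal.ofReal (lam / mu)
            * ∫⁻ y in Set.Ioi 0, ENNReal.ofReal EM * F y := by
          congr 1
          exact setLIntegral_congr_fun measurableSet_Ioi
            (fun y hy => by rw [hshift y hy])
      _ = ENNReal.ofReal (lam / mu)
            * (ENNReal.ofReal EM * ∫⁻ y in Set.Ioi 0, F y) := by
          rw [lintegral_const_mul' _ _ ENNReal.ofReal_ne_top]
      _ ≤ ENNReal.ofReal (lam / mu) * (ENNReal.ofReal EM * 1) := by
          gcongr
          rw [← htot]
          exact setLIntegral_le_lintegral _ _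
      _ = _ := by rw [mul_one]
  set Q : ENNReal := ∫⁻ y in Set.Ioo 0 c, F y with hQdef
  set gc : ENNReal := ∫⁻ t in Set.Ioo 0 c, G t with hgcdef
  have hIooIoc : volume.restrict (Set.Ioc (0:ℝ) c) = volume.restrict (Set.Ioo (0:ℝ) c) :=
    (Measure.restrict_congr_set Ioo_ae_eq_Ioc).symm
  -- L1 as a double integral over the triangle
  have hL1eq : L1 = ENNReal.ofReal (lam / mu)
      * ∫⁻ x in Set.Ioc 0 c, ∫⁻ y in Set.Ioo 0 x, G (x - y) * F y := by
    rw [← lintegral_const_mul' _ _ ENNReal.ofReal_ne_top]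
    refine lintegral_congr_ae ?_
    filter_upwards [ae_restrict_of_ae_restrict_of_subset Set.Ioc_subset_Ioi_self heq',
      ae_restrict_mem measurableSet_Ioc] with x hx hxm
    rw [show ENNReal.ofReal x = ENNReal.ofReal (min x c) by rw [min_eq_left hxm.2]]
    exact hx
  -- lower bound of the inner integral
  have hinner : ∀ y : ℝ, y ∈ Set.Ioo (0:ℝ) c →
      gc - ENNReal.ofReal y ≤ ∫⁻ x in Set.Ioc 0 c ∩ Set.Ioi y, G (x - y) := by
    intro y hy
    have h1 : Set.Ioc (0:ℝ) c ∩ Set.Ioi y = Set.Ioc y c := by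
      ext x
      simp only [Set.mem_inter_iff, Set.mem_Ioc, Set.mem_Ioi]
      exact ⟨fun h => ⟨h.2, h.1.2⟩, fun h => ⟨⟨lt_trans hy.1 h.1, h.2⟩, h.1⟩⟩
    have h2 : (fun u => u + y) ⁻¹' Set.Ioc y c = Set.Ioc 0 (c - y) := by
      ext u
      simp only [Set.mem_preimage, Set.mem_Ioc]
      constructor
      · exact fun h => ⟨by linarith [h.1], by linarith [h.2]⟩
      · exact fun h => ⟨by linarith [h.1], by linarith [h.2]⟩
    rw [h1, shift_lint y G (Set.Ioc y c), h2]
    rw [tsub_le_iff_right]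
    calc gc ≤ ∫⁻ t in Set.Ioc 0 c, G t := lintegral_mono_set Set.Ioo_subset_Ioc_self
      _ = (∫⁻ t in Set.Ioc 0 (c - y), G t) + ∫⁻ t in Set.Ioc (c - y) c, G t := by
          rw [← lintegral_union measurableSet_Ioc (Set.Ioc_disjoint_Ioc_of_le le_rfl),
            Set.Ioc_union_Ioc_eq_Ioc (by linarith [hy.2]) (by linarith [hy.1])]
      _ ≤ (∫⁻ t in Set.Ioc 0 (c - y), G t) + ENNReal.ofReal y := by
          gcongr
          calc ∫⁻ t in Set.Ioc (c - y) c, G t ≤ ∫⁻ _ in Set.Ioc (c - y) c, 1 :=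
                lintegral_mono fun t => hGle1 t
            _ = volume (Set.Ioc (c - y) c) := setLIntegral_one _
            _ = ENNReal.ofReal y := by rw [Real.volume_Ioc, sub_sub_cancel]
  -- KEY 2 : (λ/μ)(gc·Q − L1) ≤ L1
  have key2 : ENNReal.ofReal (lam / mu) * (gc * Q - L1) ≤ L1 := by
    have hL1' : L1 = ∫⁻ y in Set.Ioo 0 c, ENNReal.ofReal y * F y := by
      rw [hL1def, hIooIoc]
    have hgcne : gc ≠ ⊤ := by rw [hEmc']; exact ENNReal.ofReal_ne_top
    have hstep : gc * Q - L1 ≤ ∫⁻ y in Set.Ioo 0 c, (gc - ENNReal.ofReal y) * F y := by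
      rw [tsub_le_iff_right, hL1']
      have hmeas1 : Measurable fun y => (gc - ENNReal.ofReal y) * F y :=
        ((measurable_const.sub ENNReal.measurable_ofReal).mul hFmeas)
      rw [← lintegral_add_left hmeas1, hQdef, ← lintegral_const_mul' _ _ hgcne]
      refine lintegral_mono fun y => ?_
      calc gc * F y ≤ ((gc - ENNReal.ofReal y) + ENNReal.ofReal y) * F y := by
            gcongr
            exact le_tsub_add
        _ = (gc - ENNReal.ofReal y) * F y + ENNReal.ofReal y * F y := by ring
    calc ENNReal.ofReal (lam / mu) * (gc * Q - L1)
        ≤ ENNReal.ofReal (lam / mu)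
            * ∫⁻ y in Set.Ioo 0 c, (gc - ENNReal.ofReal y) * F y := by gcongr
      _ ≤ ENNReal.ofReal (lam / mu)
            * ∫⁻ y in Set.Ioo 0 c, (∫⁻ x in Set.Ioc 0 c ∩ Set.Ioi y, G (x - y)) * F y := by
          refine mul_le_mul_right (lintegral_mono_ae ?_) _
          filter_upwards [ae_restrict_mem measurableSet_Ioo] with y hy
          exact mul_le_mul_left (hinner y hy) _
      _ ≤ ENNReal.ofReal (lam / mu)
            * ∫⁻ y in Set.Ioi 0, (∫⁻ x in Set.Ioc 0 c ∩ Set.Ioi y, G (x - y)) * F y :=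
          mul_le_mul_right (lintegral_mono_set Set.Ioo_subset_Ioi_self) _
      _ = L1 := by rw [hL1eq, tri_swap _ G F hGmeas hFmeas]
  -- pass to real numbers
  have hRHSne : ENNReal.ofReal (lam / mu) * ENNReal.ofReal EM ≠ ⊤ :=
    ENNReal.mul_ne_top ENNReal.ofReal_ne_top ENNReal.ofReal_ne_top
  have hL1ne : L1 ≠ ⊤ :=
    ne_top_of_le_ne_top hRHSne (le_trans le_self_add key1)
  have hEMnn : 0 ≤ EM := integral_nonneg fun ω => hM0 ω
  have hEmcnn : 0 ≤ Emc := integral_nonneg fun ω => le_min (hM0 ω) hc.le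
  set a : ℝ := L1.toReal with hadef
  set p : ℝ := (P {ω | c < X ω}).toReal with hpdef
  set q : ℝ := (P {ω | X ω ≤ c}).toReal with hqdef
  have hqQ : Q.toReal = q := by rw [hqdef, hQ]
  have hQne : Q ≠ ⊤ := by rw [← hQ]; exact measure_ne_top P _
  have key1R : a + c * p ≤ (lam / mu) * EM := by
    have h := ENNReal.toReal_mono hRHSne key1
    rwa [ENNReal.toReal_add hL1ne (ENNReal.mul_ne_top ENNReal.ofReal_ne_top (measure_ne_top P _)),
      ENNReal.toReal_mul, ENNReal.toReal_ofReal hc.le, ENNReal.toReal_mul,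
      ENNReal.toReal_ofReal (div_nonneg hlam.le hmu.le), ENNReal.toReal_ofReal hEMnn] at h
  have hgcQtoReal : (gc * Q).toReal = Emc * q := by
    rw [ENNReal.toReal_mul, hEmc', ENNReal.toReal_ofReal hEmcnn, hqQ]
  have hgcQne : gc * Q ≠ ⊤ := by
    rw [hEmc']
    exact ENNReal.mul_ne_top ENNReal.ofReal_ne_top hQne
  have key2R : (lam / mu) * (Emc * q - a) ≤ a := by
    by_cases h : gc * Q ≤ L1
    · have h' : Emc * q ≤ a := by
        rw [← hgcQtoReal, hadef]; exact ENNReal.toReal_mono hL1ne h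
      nlinarith [ENNReal.toReal_nonneg (a := L1), div_pos hlam hmu]
    · have h' : L1 ≤ gc * Q := le_of_not_ge h
      have h2 := ENNReal.toReal_mono hL1ne key2
      rwa [ENNReal.toReal_mul, ENNReal.toReal_ofReal (div_nonneg hlam.le hmu.le),
        ENNReal.toReal_sub_of_le h' hgcQne, hgcQtoReal] at h2
  have hpq : q + p = 1 := by
    have hu : {ω | X ω ≤ c} ∪ {ω | c < X ω} = Set.univ := by
      ext ω; simp [le_or_gt]
    have hd : Disjoint {ω | X ω ≤ c} {ω | c < X ω} := by
      rw [Set.disjoint_left]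
      intro ω h1 h2
      simp only [Set.mem_setOf_eq] at h1 h2
      exact absurd h1 (not_le.2 h2)
    have hm : P {ω | X ω ≤ c} + P {ω | c < X ω} = 1 := by
      rw [← measure_union hd (hX measurableSet_Ioi), hu, measure_univ]
    rw [hqdef, hpdef, ← ENNReal.toReal_add (measure_ne_top P _) (measure_ne_top P _), hm,
      ENNReal.toReal_one]
  -- final algebra
  have hq0 : 0 ≤ q := ENNReal.toReal_nonneg
  have hp0 : 0 ≤ p := ENNReal.toReal_nonneg
  have ha0 : 0 ≤ a := ENNReal.toReal_nonneg
  have hBq : lam / (lam + mu) * Emc * q ≤ a := by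
    have h2 : lam * (Emc * q - a) ≤ mu * a := by
      have h := mul_le_mul_of_nonneg_right key2R hmu.le
      calc lam * (Emc * q - a) = lam / mu * (Emc * q - a) * mu := by
            field_simp
        _ ≤ a * mu := h
        _ = mu * a := mul_comm _ _
    rw [div_mul_eq_mul_div, div_mul_eq_mul_div, div_le_iff₀ (by positivity)]
    nlinarith [h2]
  have hEmclec : Emc ≤ c := by
    calc Emc ≤ ∫ _ω, c ∂P := integral_mono hMcint (integrable_const c)
          fun ω => min_le_right _ _
      _ = c := by simp
  have hcB : 0 < c - lam / (lam + mu) * Emc := by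
    have h1 : lam / (lam + mu) * Emc ≤ lam / (lam + mu) * c :=
      mul_le_mul_of_nonneg_left hEmclec (by positivity)
    have h2 : lam / (lam + mu) * c < c := by
      rw [div_mul_eq_mul_div, div_lt_iff₀ (by positivity)]
      nlinarith
    linarith
  rw [le_div_iff₀ hcB]
  have hBq' : lam / (lam + mu) * Emc * (1 - p) ≤ a := by
    rw [show (1:ℝ) - p = q by linarith]
    exact hBq
  nlinarith [key1R, hBq', ha0]
end

section
/- Fix p ∈ [0, 1] and θ ≤ 0. For each n ∈ ℤ⁺, let B(n) be an ℕ-valued random variable, and let M be a non-negative, almost surely finite random variable such that B(n)/n converges in distribution to M as n → ∞. Then E[(1 + p(e^{θ/n} − 1))^{B(n)}] → E[e^{θ p M}] as n → ∞. -/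
open MeasureTheory Filter Real

lemma aux_t_exp_le {t m : ℝ} (ht : 0 ≤ t) (hm : m < 0) :
    t * Real.exp (t * m) ≤ 1 / (-m) := by
  rw [le_div_iff₀ (by linarith : (0:ℝ) < -m)]
  have h1 := Real.add_one_le_exp (-(t * m))
  rw [Real.exp_neg] at h1
  have h3 := Real.exp_pos (t * m)
  have h4 := mul_le_mul_of_nonneg_right h1 h3.le
  rw [inv_mul_cancel₀ h3.ne'] at h4
  nlinarith

lemma aux_exp_diff {t a b m : ℝ} (ht : 0 ≤ t) (ha : a ≤ m) (hb : b ≤ m) (hm : m < 0) :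
    |Real.exp (t * a) - Real.exp (t * b)| ≤ |a - b| * (1 / (-m)) := by
  have key : ∀ x y : ℝ, x ≤ y → y ≤ m →
      Real.exp (t * y) - Real.exp (t * x) ≤ (y - x) * (1 / (-m)) := by
    intro x y hxy hym
    have h1 : Real.exp (t * x) = Real.exp (t * y) * Real.exp (t * (x - y)) := by
      rw [← Real.exp_add]; ring_nf
    have h2 : 1 + t * (x - y) ≤ Real.exp (t * (x - y)) := by
      have := Real.add_one_le_exp (t * (x - y)); linarith
    have h3 : Real.exp (t * y) ≤ Real.exp (t * m) :=
      Real.exp_le_exp.mpr (by nlinarith)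
    have h4 : Real.exp (t * y) - Real.exp (t * x) ≤ Real.exp (t * m) * (t * (y - x)) := by
      rw [h1]
      have h5 : Real.exp (t*y) * (1 - Real.exp (t*(x-y))) ≤ Real.exp (t*y) * (t*(y-x)) :=
        mul_le_mul_of_nonneg_left (by linarith) (Real.exp_pos _).le
      nlinarith [Real.exp_pos (t*y), mul_le_mul_of_nonneg_right h3
        (mul_nonneg ht (by linarith : (0:ℝ) ≤ y - x))]
    have h6 := aux_t_exp_le ht hm
    calc Real.exp (t * y) - Real.exp (t * x) ≤ Real.exp (t*m) * (t * (y-x)) := h4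
      _ = (t * Real.exp (t*m)) * (y - x) := by ring
      _ ≤ (1 / (-m)) * (y - x) := mul_le_mul_of_nonneg_right h6 (by linarith)
      _ = (y - x) * (1 / (-m)) := by ring
  rcases le_total a b with h | h
  · have hexp : Real.exp (t * a) ≤ Real.exp (t * b) := Real.exp_le_exp.mpr (by nlinarith)
    rw [abs_sub_comm, abs_of_nonneg (sub_nonneg.mpr hexp), abs_sub_comm,
      abs_of_nonneg (sub_nonneg.mpr h)]
    exact key a b h hb
  · have hexp : Real.exp (t * b) ≤ Real.exp (t * a) := Real.exp_le_exp.mpr (by nlinarith)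
    rw [abs_of_nonneg (sub_nonneg.mpr hexp), abs_of_nonneg (sub_nonneg.mpr h)]
    exact key b a h ha

lemma aux_slope (p θ : ℝ) : Tendsto (fun n : ℕ => (n : ℝ) * Real.log (1 + p * (Real.exp (θ / n) - 1)))
      atTop (nhds (θ * p)) := by
  set g : ℝ → ℝ := fun t => Real.log (1 + p * (Real.exp (θ * t) - 1)) with hg
  have hderiv : HasDerivAt g (θ * p) 0 := by
    have h1 : HasDerivAt (fun t : ℝ => θ * t) θ 0 := by
      simpa using (hasDerivAt_id (0:ℝ)).const_mul θ
    have h2 : HasDerivAt (fun t : ℝ => Real.exp (θ * t)) (Real.exp (θ * 0) * θ) 0 := h1.exp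
    have h3 : HasDerivAt (fun t : ℝ => 1 + p * (Real.exp (θ * t) - 1))
        (p * (Real.exp (θ * 0) * θ)) 0 := ((h2.sub_const 1).const_mul p).const_add 1
    have h4 := h3.log (by simp)
    have : p * (Real.exp (θ * 0) * θ) / (1 + p * (Real.exp (θ * 0) - 1)) = θ * p := by
      simp [Real.exp_zero]; ring
    rw [this] at h4
    exact h4
  have hslope := hasDerivAt_iff_tendsto_slope.mp hderiv
  have h0 : g 0 = 0 := by simp [hg]
  have hseq : Tendsto (fun n : ℕ => (1 : ℝ) / n) atTop (nhdsWithin (0:ℝ) {(0:ℝ)}ᶜ) := by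
    rw [tendsto_nhdsWithin_iff]
    refine ⟨tendsto_one_div_atTop_nhds_zero_nat, ?_⟩
    filter_upwards [eventually_ge_atTop 1] with n hn
    have : (n : ℝ) ≠ 0 := Nat.cast_ne_zero.mpr (Nat.one_le_iff_ne_zero.mp hn)
    simp [this]
  have hcomp := hslope.comp hseq
  refine hcomp.congr' ?_
  filter_upwards [eventually_ge_atTop 1] with n hn
  have hn' : (n : ℝ) ≠ 0 := Nat.cast_ne_zero.mpr (Nat.one_le_iff_ne_zero.mp hn)
  simp only [Function.comp, slope_def_field, h0, hg]
  rw [mul_one_div θ (n:ℝ)]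
  field_simp
  simp [Real.exp_zero]

/-- Moment-generating-function convergence of thinned batches under batch scaling: if
`B(n)/n` converges in distribution to the non-negative random variable `M`, then for
`p ∈ [0,1]` and `θ ≤ 0`,
`E[(1 + p(e^{θ/n} − 1))^{B(n)}] → E[e^{θ p M}]`. -/
theorem thinned_batch_mgf_convergence
    {Ω : Type*} [MeasurableSpace Ω] (P : Measure Ω) [IsProbabilityMeasure P]
    (p θ : ℝ) (hp0 : 0 ≤ p) (hp1 : p ≤ 1) (hθ : θ ≤ 0)
    (B : ℕ → Ω → ℕ) (hB : ∀ n, Measurable (B n))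
    (M : Ω → ℝ) (hM : Measurable M) (hM0 : ∀ ω, 0 ≤ M ω)
    -- `B(n)/n` converges in distribution to `M`
    (hconv : ∀ f : BoundedContinuousFunction ℝ ℝ,
      Tendsto (fun n : ℕ => ∫ ω, f ((B n ω : ℝ) / (n : ℝ)) ∂P) atTop
        (nhds (∫ ω, f (M ω) ∂P))) :
    Tendsto
      (fun n : ℕ => ∫ ω, (1 + p * (Real.exp (θ / (n : ℝ)) - 1)) ^ (B n ω) ∂P)
      atTop (nhds (∫ ω, Real.exp (θ * p * M ω) ∂P)) := by
  by_cases hpθ0 : θ * p = 0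
  · -- degenerate case: integrands are constant 1
    have hbase : ∀ n : ℕ, (1 + p * (Real.exp (θ / (n:ℝ)) - 1)) = 1 := by
      rcases mul_eq_zero.mp hpθ0 with h | h
      · intro n; simp [h]
      · intro n; simp [h]
    have h1 : ∀ n : ℕ, (∫ ω, (1 + p * (Real.exp (θ / (n : ℝ)) - 1)) ^ (B n ω) ∂P) = 1 := by
      intro n; simp [hbase n]
    have h2 : (∫ ω, Real.exp (θ * p * M ω) ∂P) = 1 := by simp [hpθ0]
    simp only [h1, h2]
    exact tendsto_const_nhds
  -- main case
  have hθp : θ * p ≤ 0 := mul_nonpos_of_nonpos_of_nonneg hθ hp0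
  have hneg : θ * p < 0 := lt_of_le_of_ne hθp hpθ0
  set m : ℝ := θ * p / 2 with hmdef
  have hm : m < 0 := by simp only [hmdef]; linarith
  have hlt : θ * p < m := by simp only [hmdef]; linarith
  have hbase_pos : ∀ n : ℕ, 0 < 1 + p * (Real.exp (θ / (n:ℝ)) - 1) := by
    intro n
    have hdn : θ / (n:ℝ) ≤ 0 := div_nonpos_of_nonpos_of_nonneg hθ (Nat.cast_nonneg n)
    nlinarith [Real.exp_pos (θ / (n:ℝ)), Real.exp_le_one_iff.mpr hdn]
  have hbase_le : ∀ n : ℕ, 1 + p * (Real.exp (θ / (n:ℝ)) - 1) ≤ 1 := by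
    intro n
    have hdn : θ / (n:ℝ) ≤ 0 := div_nonpos_of_nonpos_of_nonneg hθ (Nat.cast_nonneg n)
    nlinarith [Real.exp_le_one_iff.mpr hdn]
  set c : ℕ → ℝ := fun n => Real.log (1 + p * (Real.exp (θ / (n:ℝ)) - 1)) with hc
  set a : ℕ → ℝ := fun n => (n:ℝ) * c n with ha'
  have ha : Tendsto a atTop (nhds (θ * p)) := aux_slope p θ
  -- the bounded continuous function x ↦ exp (θ p max(x,0))
  have hFle : ∀ x : ℝ, Real.exp (θ * p * max x 0) ≤ 1 := fun x =>
    Real.exp_le_one_iff.mpr (mul_nonpos_of_nonpos_of_nonneg hθp (le_max_right x 0))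
  set F : BoundedContinuousFunction ℝ ℝ := BoundedContinuousFunction.mkOfBound
    ⟨fun x => Real.exp (θ * p * max x 0), by fun_prop⟩ 2 (fun x y => by
      simp only [ContinuousMap.coe_mk]
      rw [Real.dist_eq, abs_sub_le_iff]
      constructor <;> nlinarith [Real.exp_pos (θ * p * max x 0),
        Real.exp_pos (θ * p * max y 0), hFle x, hFle y]) with hF
  have hFval : ∀ x : ℝ, 0 ≤ x → F x = Real.exp (θ * p * x) := by
    intro x hx
    have : F x = Real.exp (θ * p * max x 0) := rfl
    rw [this, max_eq_left hx]
  -- limit of the Gaussian-like part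
  have hgL : Tendsto (fun n : ℕ => ∫ ω, Real.exp (θ * p * ((B n ω : ℝ) / n)) ∂P) atTop
      (nhds (∫ ω, Real.exp (θ * p * M ω) ∂P)) := by
    have h := hconv F
    have e1 : ∀ n : ℕ, (∫ ω, F ((B n ω : ℝ) / n) ∂P)
        = ∫ ω, Real.exp (θ * p * ((B n ω : ℝ) / n)) ∂P := by
      intro n
      refine integral_congr_ae (ae_of_all _ fun ω => ?_)
      exact hFval _ (div_nonneg (Nat.cast_nonneg _) (Nat.cast_nonneg _))
    have e2 : (∫ ω, F (M ω) ∂P) = ∫ ω, Real.exp (θ * p * M ω) ∂P := by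
      refine integral_congr_ae (ae_of_all _ fun ω => ?_)
      exact hFval _ (hM0 ω)
    simpa only [e1, e2] using h
  -- integrability
  have hfmeas : ∀ n : ℕ, Measurable fun ω => (1 + p * (Real.exp (θ / (n:ℝ)) - 1)) ^ (B n ω) :=
    fun n => Measurable.comp measurable_from_nat (hB n)
  have hfint : ∀ n : ℕ,
      Integrable (fun ω => (1 + p * (Real.exp (θ / (n:ℝ)) - 1)) ^ (B n ω)) P := by
    intro n
    refine (integrable_const (1:ℝ)).mono' (hfmeas n).aestronglyMeasurable
      (ae_of_all _ fun ω => ?_)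
    rw [Real.norm_eq_abs, abs_of_nonneg (pow_nonneg (hbase_pos n).le _)]
    exact pow_le_one₀ (hbase_pos n).le (hbase_le n)
  have hgmeas : ∀ n : ℕ, Measurable fun ω => Real.exp (θ * p * ((B n ω : ℝ) / n)) := by
    intro n
    exact (measurable_const.mul (((measurable_from_nat.comp (hB n)) :
      Measurable fun ω => (B n ω : ℝ)).div_const _)).exp
  have hgint : ∀ n : ℕ, Integrable (fun ω => Real.exp (θ * p * ((B n ω : ℝ) / n))) P := by
    intro n
    refine (integrable_const (1:ℝ)).mono' (hgmeas n).aestronglyMeasurable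
      (ae_of_all _ fun ω => ?_)
    rw [Real.norm_eq_abs, abs_of_nonneg (Real.exp_pos _).le]
    exact Real.exp_le_one_iff.mpr (mul_nonpos_of_nonpos_of_nonneg hθp
      (div_nonneg (Nat.cast_nonneg _) (Nat.cast_nonneg _)))
  -- difference goes to 0
  have hdiff : Tendsto (fun n : ℕ =>
      (∫ ω, (1 + p * (Real.exp (θ / (n:ℝ)) - 1)) ^ (B n ω) ∂P)
        - ∫ ω, Real.exp (θ * p * ((B n ω : ℝ) / n)) ∂P) atTop (nhds 0) := by
    apply squeeze_zero_norm'
      (a := fun n : ℕ => |a n - θ * p| * (1 / (-m)))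
    · filter_upwards [eventually_ge_atTop 1, ha.eventually_lt_const hlt] with n hn han
      have hn' : (n:ℝ) ≠ 0 := Nat.cast_ne_zero.mpr (Nat.one_le_iff_ne_zero.mp hn)
      rw [← integral_sub (hfint n) (hgint n)]
      have hbound := norm_integral_le_of_norm_le_const (μ := P)
        (f := fun ω => (1 + p * (Real.exp (θ / (n:ℝ)) - 1)) ^ (B n ω)
          - Real.exp (θ * p * ((B n ω : ℝ) / n)))
        (C := |a n - θ * p| * (1 / (-m)))
        (ae_of_all _ fun ω => by
          show ‖(1 + p * (Real.exp (θ / (n:ℝ)) - 1)) ^ (B n ω)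
              - Real.exp (θ * p * ((B n ω : ℝ) / n))‖ ≤ |a n - θ * p| * (1 / (-m))
          set t : ℝ := (B n ω : ℝ) / n with htdef
          have ht0 : 0 ≤ t := div_nonneg (Nat.cast_nonneg _) (Nat.cast_nonneg _)
          have hb1 : (1 + p * (Real.exp (θ / (n:ℝ)) - 1)) ^ (B n ω)
              = Real.exp (t * a n) := by
            rw [show t * a n = (B n ω : ℝ) * c n by
              simp only [htdef, ha']; field_simp]
            rw [Real.exp_nat_mul, Real.exp_log (hbase_pos n)]
          have hb2 : Real.exp (θ * p * t) = Real.exp (t * (θ * p)) := by rw [mul_comm]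
          rw [hb1, hb2, Real.norm_eq_abs]
          exact aux_exp_diff ht0 han.le hlt.le hm)
      simpa using hbound
    · have h1 : Tendsto (fun n => a n - θ * p) atTop (nhds 0) := by
        simpa using ha.sub_const (θ * p)
      have h2 : Tendsto (fun n => |a n - θ * p| * (1 / (-m))) atTop
          (nhds (|0| * (1 / (-m)))) := (h1.abs).mul_const _
      simpa using h2
  have := hdiff.add hgL
  simpa using this
end
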